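/- arXiv:2201.02159 — 8 statements merged into one kernel-verified Lean document; each statement's English description precedes it below -/
import Mathlib

section
/- Every function of bounded variation g : [a,b] → ℝ has a finitely permeable graph: for every y ∈ ℝ and δ > 0 there exists a function f : [a,b] → ℝ with f(a) = f(b) = y, total variation of f over [a,b] strictly less than δ, and such that the set {t ∈ [a,b] : f(t) = g(t)} is finite. -/
open Set MeasureTheory
open scoped ENNReal

/-- The total variation of the "bump" step function (value `c` on `(a,b)`, `y` elsewhere)
is at most `2 * edist c y`. -/
lemma step_evar_le (a b y c : ℝ) :
    eVariationOn (fun t => if a < t ∧ t < b then c else y) (Set.Icc a b)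
      ≤ 2 * edist c y := by
  classical
  apply iSup_le
  rintro ⟨n, u, hu, -⟩
  set f : ℝ → ℝ := fun t => if a < t ∧ t < b then c else y with hf
  set T : Finset ℕ := (Finset.range n).filter
    (fun i => ¬ ((a < u i ∧ u i < b) ↔ (a < u (i+1) ∧ u (i+1) < b))) with hT
  set Tp : Finset ℕ := (Finset.range n).filter
    (fun i => ¬ (a < u i) ∧ a < u (i+1)) with hTp
  set Tq : Finset ℕ := (Finset.range n).filter
    (fun i => u i < b ∧ ¬ (u (i+1) < b)) with hTq
  have hsubT : T ⊆ Tp ∪ Tq := by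
    intro i hi
    obtain ⟨hir, hiff⟩ := Finset.mem_filter.1 hi
    have h1 : a < u i → a < u (i+1) := fun h => lt_of_lt_of_le h (hu (Nat.le_succ i))
    have h2 : u (i+1) < b → u i < b := fun h => lt_of_le_of_lt (hu (Nat.le_succ i)) h
    rw [Finset.mem_union, Finset.mem_filter, Finset.mem_filter]
    by_cases hp : (a < u i) ↔ (a < u (i+1))
    · by_cases hq : (u i < b) ↔ (u (i+1) < b)
      · exact absurd (by rw [hp, hq]) hiff
      · exact Or.inr ⟨hir, by tauto⟩
    · exact Or.inl ⟨hir, by tauto⟩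
  have hcardp : Tp.card ≤ 1 := by
    rw [Finset.card_le_one]
    intro i hi j hj
    obtain ⟨-, hi1, hi2⟩ := Finset.mem_filter.1 hi
    obtain ⟨-, hj1, hj2⟩ := Finset.mem_filter.1 hj
    by_contra hne
    rcases Nat.lt_or_ge i j with h | h
    · exact hj1 (lt_of_lt_of_le hi2 (hu h))
    · have : j < i := by omega
      exact hi1 (lt_of_lt_of_le hj2 (hu this))
  have hcardq : Tq.card ≤ 1 := by
    rw [Finset.card_le_one]
    intro i hi j hj
    obtain ⟨-, hi1, hi2⟩ := Finset.mem_filter.1 hi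
    obtain ⟨-, hj1, hj2⟩ := Finset.mem_filter.1 hj
    by_contra hne
    rcases Nat.lt_or_ge i j with h | h
    · exact hi2 (lt_of_le_of_lt (hu h) hj1)
    · have : j < i := by omega
      exact hj2 (lt_of_le_of_lt (hu this) hi1)
  have hcardT : T.card ≤ 2 := by
    calc T.card ≤ (Tp ∪ Tq).card := Finset.card_le_card hsubT
    _ ≤ Tp.card + Tq.card := Finset.card_union_le _ _
    _ ≤ 2 := by omega
  have hzero : ∀ i ∈ Finset.range n, i ∉ T → edist (f (u (i+1))) (f (u i)) = 0 := by
    intro i hi hiT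
    have hiff : (a < u i ∧ u i < b) ↔ (a < u (i+1) ∧ u (i+1) < b) := by
      by_contra h
      exact hiT (Finset.mem_filter.2 ⟨hi, h⟩)
    by_cases h1 : a < u i ∧ u i < b
    · simp only [hf, if_pos h1, if_pos (hiff.1 h1), edist_self]
    · simp only [hf, if_neg h1, if_neg (fun h => h1 (hiff.2 h)), edist_self]
  calc ∑ i ∈ Finset.range n, edist (f (u (i+1))) (f (u i))
      = ∑ i ∈ T, edist (f (u (i+1))) (f (u i)) :=
        (Finset.sum_subset (Finset.filter_subset _ _) hzero).symm
    _ ≤ ∑ _i ∈ T, edist c y := by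
        apply Finset.sum_le_sum
        intro i _
        show edist (f (u (i+1))) (f (u i)) ≤ edist c y
        by_cases h1 : a < u (i+1) ∧ u (i+1) < b <;> by_cases h2 : a < u i ∧ u i < b
        · simp only [hf, if_pos h1, if_pos h2, edist_self]; exact zero_le
        · simp only [hf, if_pos h1, if_neg h2]; exact le_rfl
        · simp only [hf, if_neg h1, if_pos h2, edist_comm y c]; exact le_rfl
        · simp only [hf, if_neg h1, if_neg h2, edist_self]; exact zero_le
    _ = T.card * edist c y := by rw [Finset.sum_const, nsmul_eq_mul]
    _ ≤ 2 * edist c y := by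
        apply mul_le_mul_left
        exact_mod_cast (show (T.card : ℝ≥0∞) ≤ ((2:ℕ) : ℝ≥0∞) by exact_mod_cast hcardT)

/-- The sum of the variations over a monotone chain of intervals is at most the variation
on the big interval. -/
lemma sum_evar_le (g : ℝ → ℝ) (x : ℕ → ℝ) (hx : Monotone x) (K : ℕ) :
    ∑ j ∈ Finset.range K, eVariationOn g (Set.Icc (x j) (x (j+1)))
      ≤ eVariationOn g (Set.Icc (x 0) (x K)) := by
  induction K with
  | zero => simp
  | succ K ih =>
    rw [Finset.sum_range_succ]
    have h := eVariationOn.Icc_add_Icc g (s := (Set.univ : Set ℝ))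
      (hx (Nat.zero_le K)) (hx (Nat.le_succ K)) (Set.mem_univ _)
    simp only [Set.univ_inter] at h
    calc ∑ j ∈ Finset.range K, eVariationOn g (Set.Icc (x j) (x (j+1)))
          + eVariationOn g (Set.Icc (x K) (x (K+1)))
        ≤ eVariationOn g (Set.Icc (x 0) (x K)) + eVariationOn g (Set.Icc (x K) (x (K+1))) :=
          add_le_add_left ih _
      _ = eVariationOn g (Set.Icc (x 0) (x (K+1))) := h

set_option maxHeartbeats 2000000 in
/-- From an infinite set one can pick `n` points with a uniform positive separation. -/
lemma exists_sep_points {S : Set ℝ} (hS : S.Infinite) (n : ℕ) :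
    ∃ (m : ℕ) (t : Fin n → ℝ), (∀ i, t i ∈ S) ∧
      ∀ i j : Fin n, i ≠ j → 1/(m+1:ℝ) < |t i - t j| := by
  classical
  obtain ⟨s, hs_sub, hs_card⟩ := hS.exists_subset_card_eq n
  let e := s.equivFinOfCardEq hs_card
  let t : Fin n → ℝ := fun i => (e.symm i : ℝ)
  have htinj : Function.Injective t := fun i j h => e.symm.injective (Subtype.ext h)
  have htmem : ∀ i, t i ∈ S := fun i => hs_sub (e.symm i).2
  by_cases hpair : ∃ ij : Fin n × Fin n, ij.1 ≠ ij.2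
  · let P : Finset (Fin n × Fin n) := Finset.univ.filter (fun ij => ij.1 ≠ ij.2)
    have hPne : P.Nonempty := ⟨hpair.choose, Finset.mem_filter.2 ⟨Finset.mem_univ _, hpair.choose_spec⟩⟩
    have hε : 0 < P.inf' hPne (fun ij => |t ij.1 - t ij.2|) := by
      rw [Finset.lt_inf'_iff]
      intro ij hij
      have hne : ij.1 ≠ ij.2 := (Finset.mem_filter.1 hij).2
      exact abs_pos.2 (sub_ne_zero.2 (fun h => hne (htinj h)))
    obtain ⟨m, hm⟩ := exists_nat_one_div_lt hε
    refine ⟨m, t, htmem, fun i j hij => lt_of_lt_of_le hm ?_⟩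
    have hmemP : (i, j) ∈ P := Finset.mem_filter.2 ⟨Finset.mem_univ _, hij⟩
    exact Finset.inf'_le (fun ij => |t ij.1 - t ij.2|) hmemP
  · exact ⟨0, t, htmem, fun i j hij => absurd ⟨(i,j), hij⟩ hpair⟩

/-- Banach-indicatrix-style lemma: a function of bounded variation has a finite level set
at some level in any nondegenerate interval. -/
lemma exists_finite_level {a b : ℝ} (hab : a ≤ b) {g : ℝ → ℝ}
    (hg : BoundedVariationOn g (Set.Icc a b)) {p q : ℝ} (hpq : p < q) :
    ∃ c ∈ Set.Ioo p q, {t ∈ Set.Icc a b | g t = c}.Finite := by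
  classical
  by_contra hcon
  push_neg at hcon
  set V := eVariationOn g (Set.Icc a b) with hV
  have hVtop : V ≠ ⊤ := hg
  set d : ℝ≥0∞ := ENNReal.ofReal ((q - p)/2) with hd
  have hd0 : d ≠ 0 := by
    simp only [hd, ne_eq, ENNReal.ofReal_eq_zero, not_le]
    linarith
  have hdtop : d ≠ ⊤ := ENNReal.ofReal_ne_top
  obtain ⟨n, hn⟩ := ENNReal.exists_nat_gt (show 2 * V / d ≠ ∞ by
    exact (ENNReal.div_lt_top (by finiteness) hd0).ne)
  have hn' : 2 * V < n * d := by
    rwa [ENNReal.div_lt_iff (Or.inl hd0) (Or.inl hdtop)] at hn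
  -- the family of levels admitting `n` preimages with gaps `> 1/(m+1)`
  set A : ℕ → Set ℝ := fun m => {c | c ∈ Set.Ioo p q ∧ ∃ t : Fin n → ℝ,
    (∀ i, t i ∈ Set.Icc a b ∧ g (t i) = c) ∧
    ∀ i j, i ≠ j → 1/(m+1:ℝ) < |t i - t j|} with hA
  have hAmono : Monotone A := by
    intro m m' hmm' c hc
    obtain ⟨hc1, t, ht1, ht2⟩ := hc
    refine ⟨hc1, t, ht1, fun i j hij => lt_of_le_of_lt ?_ (ht2 i j hij)⟩
    apply one_div_le_one_div_of_le
    · positivity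
    · have : (m:ℝ) ≤ m' := by exact_mod_cast hmm'
      linarith
  have hAunion : ⋃ m, A m = Set.Ioo p q := by
    apply Set.Subset.antisymm
    · exact Set.iUnion_subset fun m c hc => hc.1
    · intro c hc
      have hinf : {t ∈ Set.Icc a b | g t = c}.Infinite := hcon c hc
      obtain ⟨m, t, htmem, hgap⟩ := exists_sep_points hinf n
      refine Set.mem_iUnion.2 ⟨m, hc, t, fun i => ⟨(htmem i).1, (htmem i).2⟩, hgap⟩
  have h1 : volume (⋃ m, A m) = ⨆ m, volume (A m) := hAmono.measure_iUnion
  have h3 : d < ⨆ m, volume (A m) := by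
    rw [← h1, hAunion, Real.volume_Ioo, hd]
    exact (ENNReal.ofReal_lt_ofReal_iff (by linarith)).2 (by linarith)
  obtain ⟨m, hm⟩ := lt_iSup_iff.1 h3
  -- choose a partition of `[a,b]` with mesh `< 1/(m+1)`
  set K : ℕ := ⌈(b - a) * (m + 1)⌉₊ + 1 with hK
  have hK0 : 0 < K := Nat.succ_pos _
  have hKR : (0:ℝ) < K := by exact_mod_cast hK0
  have hmesh : (b - a) / K < 1 / (m + 1 : ℝ) := by
    rw [div_lt_div_iff₀ hKR (by positivity)]
    calc (b-a) * (m+1) ≤ (⌈(b-a)*(m+1)⌉₊ : ℝ) := Nat.le_ceil _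
    _ < K := by
        have : (⌈(b-a)*(m+1)⌉₊ : ℝ) < (⌈(b-a)*(m+1)⌉₊ : ℝ) + 1 := by linarith
        simpa [hK] using this
    _ = 1 * K := (one_mul _).symm
  set x : ℕ → ℝ := fun j => a + j * ((b - a)/K) with hx
  have hstep0 : (0:ℝ) ≤ (b - a)/K := by
    apply div_nonneg (by linarith) (le_of_lt hKR)
  have hxmono : Monotone x := by
    intro j j' hj
    simp only [hx]
    have : (j:ℝ) ≤ j' := by exact_mod_cast hj
    nlinarith
  have hx0 : x 0 = a := by simp [hx]
  have hxK : x K = b := by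
    simp only [hx]
    rw [mul_div_cancel₀ _ (ne_of_gt hKR)]
    ring
  have hxlen : ∀ j, x (j+1) - x j = (b - a)/K := by
    intro j
    simp only [hx, Nat.cast_add, Nat.cast_one]
    ring
  have hcover : ∀ t ∈ Set.Icc a b, ∃ j, j < K ∧ t ∈ Set.Icc (x j) (x (j+1)) := by
    intro t ht
    rcases eq_or_lt_of_le hab with hba | hba
    · refine ⟨0, hK0, ?_⟩
      have hta : t = a := le_antisymm (hba ▸ ht.2) ht.1
      have hx1 : x 1 = a := by simp [hx, ← hba]
      constructor
      · rw [hx0, hta]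
      · norm_num [hta, hx1]
    · have hh0 : 0 < (b - a)/K := div_pos (by linarith) hKR
      set j0 := ⌊(t - a)/((b-a)/K)⌋₊ with hj0
      refine ⟨min j0 (K-1), by omega, ?_, ?_⟩
      · show x (min j0 (K-1)) ≤ t
        have h2 : (j0 : ℝ) ≤ (t - a)/((b-a)/K) :=
          Nat.floor_le (div_nonneg (by linarith [ht.1]) hh0.le)
        have h1 : ((min j0 (K-1) : ℕ) : ℝ) ≤ (t - a)/((b-a)/K) :=
          le_trans (by exact_mod_cast Nat.min_le_left j0 (K-1)) h2
        have h3 : ((min j0 (K-1) : ℕ) : ℝ) * ((b-a)/K) ≤ t - a := by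
          rw [← le_div_iff₀ hh0]
          exact h1
        simp only [hx]
        linarith
      · show t ≤ x (min j0 (K-1) + 1)
        rcases le_or_gt j0 (K-1) with hcase | hcase
        · rw [min_eq_left hcase]
          have h2 : (t - a)/((b-a)/K) < (j0 : ℝ) + 1 := Nat.lt_floor_add_one _
          have h3 : t - a < ((j0:ℝ) + 1) * ((b-a)/K) := by
            rw [div_lt_iff₀ hh0] at h2
            linarith
          simp only [hx, Nat.cast_add, Nat.cast_one]
          linarith
        · rw [min_eq_right (le_of_lt hcase)]
          have : K - 1 + 1 = K := by omega
          rw [this, hxK]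
          exact ht.2
  set W : ℕ → ℝ≥0∞ := fun j => eVariationOn g (Set.Icc (x j) (x (j+1))) with hW
  have hsub : ∀ j, j < K → Set.Icc (x j) (x (j+1)) ⊆ Set.Icc a b := by
    intro j hj
    apply Set.Icc_subset_Icc
    · rw [← hx0]; exact hxmono (Nat.zero_le j)
    · rw [← hxK]; exact hxmono (by omega)
  have hWtop : ∀ j, j < K → W j ≠ ⊤ := fun j hj =>
    ne_top_of_le_ne_top hVtop (eVariationOn.mono g (hsub j hj))
  set I : ℕ → Set ℝ := fun j => Set.Icc (g (x j) - (W j).toReal) (g (x j) + (W j).toReal)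
    with hI
  set F : ℝ → ℝ≥0∞ := fun c => ∑ j ∈ Finset.range K,
    (I j).indicator (fun _ => (1:ℝ≥0∞)) c with hF
  have hFmeas : Measurable F := by
    apply Finset.measurable_sum
    intro j _
    exact measurable_const.indicator measurableSet_Icc
  set B : Set ℝ := {c | (n : ℝ≥0∞) ≤ F c} with hB
  have hBmeas : MeasurableSet B := hFmeas measurableSet_Ici
  have hAB : A m ⊆ B := by
    rintro c ⟨hc, t, ht, hgap⟩
    choose k hkK hk using fun i => hcover (t i) (ht i).1
    have hkinj : Function.Injective k := by
      intro i i' hkeq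
      by_contra hne
      have hmem1 := hk i
      have hmem2 := hk i'
      rw [hkeq] at hmem1
      rw [Set.mem_Icc] at hmem1 hmem2
      have hlen := hxlen (k i')
      have habs : |t i - t i'| ≤ (b-a)/K := by
        rw [abs_sub_le_iff]
        constructor
        · calc t i - t i' ≤ x (k i' + 1) - x (k i') := by linarith [hmem1.2, hmem2.1]
            _ = (b-a)/K := hlen
        · calc t i' - t i ≤ x (k i' + 1) - x (k i') := by linarith [hmem2.2, hmem1.1]
            _ = (b-a)/K := hlen
      have := hgap i i' hne
      linarith
    have hcI : ∀ i, c ∈ I (k i) := by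
      intro i
      have hxj_mem : x (k i) ∈ Set.Icc (x (k i)) (x (k i + 1)) :=
        ⟨le_refl _, hxmono (Nat.le_succ _)⟩
      have hedist := eVariationOn.edist_le g (hk i) hxj_mem
      rw [(ht i).2] at hedist
      have hdist : dist c (g (x (k i))) ≤ (W (k i)).toReal := by
        rw [edist_dist] at hedist
        exact (ENNReal.ofReal_le_iff_le_toReal (hWtop _ (hkK i))).1 hedist
      rw [Real.dist_eq] at hdist
      have := abs_le.1 hdist
      exact ⟨by linarith [this.1], by linarith [this.2]⟩
    have himg : Finset.univ.image k ⊆ Finset.range K := by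
      intro j hj
      obtain ⟨i, -, rfl⟩ := Finset.mem_image.1 hj
      exact Finset.mem_range.2 (hkK i)
    show (n : ℝ≥0∞) ≤ F c
    calc (n : ℝ≥0∞) = ((Finset.univ.image k).card : ℝ≥0∞) := by
          rw [Finset.card_image_of_injective _ hkinj, Finset.card_univ, Fintype.card_fin]
      _ = ∑ j ∈ Finset.univ.image k, (I j).indicator (fun _ => (1:ℝ≥0∞)) c := by
          have hone : ∀ j ∈ Finset.univ.image k,
              (I j).indicator (fun _ => (1:ℝ≥0∞)) c = 1 := by
            intro j hj
            obtain ⟨i, -, rfl⟩ := Finset.mem_image.1 hj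
            exact Set.indicator_of_mem (hcI i) _
          rw [Finset.sum_congr rfl hone, Finset.sum_const, nsmul_eq_mul, mul_one]
      _ ≤ F c := Finset.sum_le_sum_of_subset himg
  have hnB : (n : ℝ≥0∞) * volume B ≤ ∑ j ∈ Finset.range K, volume (I j) := by
    rw [← lintegral_indicator_const hBmeas (n : ℝ≥0∞)]
    calc ∫⁻ c, B.indicator (fun _ => (n:ℝ≥0∞)) c
        ≤ ∫⁻ c, F c := by
          apply lintegral_mono
          intro c
          by_cases hc : c ∈ B
          · rw [Set.indicator_of_mem hc]; exact hc
          · rw [Set.indicator_of_notMem hc]; exact zero_le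
      _ = ∑ j ∈ Finset.range K, volume (I j) := by
          rw [hF]
          rw [lintegral_finset_sum _ (fun j _ => measurable_const.indicator measurableSet_Icc)]
          exact Finset.sum_congr rfl fun j _ => by
            rw [lintegral_indicator_const measurableSet_Icc, one_mul]
  have hIj : ∀ j ∈ Finset.range K, volume (I j) ≤ 2 * W j := by
    intro j hj
    rw [hI]
    simp only []
    rw [Real.volume_Icc]
    have heq : g (x j) + (W j).toReal - (g (x j) - (W j).toReal) = 2 * (W j).toReal := by ring
    rw [heq, ENNReal.ofReal_mul (by norm_num : (0:ℝ) ≤ 2),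
      ENNReal.ofReal_toReal (hWtop j (Finset.mem_range.1 hj)), ENNReal.ofReal_ofNat]
  have hsum : ∑ j ∈ Finset.range K, volume (I j) ≤ 2 * V := by
    calc ∑ j ∈ Finset.range K, volume (I j) ≤ ∑ j ∈ Finset.range K, 2 * W j :=
          Finset.sum_le_sum hIj
      _ = 2 * ∑ j ∈ Finset.range K, W j := by rw [Finset.mul_sum]
      _ ≤ 2 * V := by
          apply mul_le_mul_right
          have := sum_evar_le g x hxmono K
          rwa [hx0, hxK] at this
  have hfinal : (n : ℝ≥0∞) * d ≤ 2 * V := by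
    calc (n : ℝ≥0∞) * d ≤ (n : ℝ≥0∞) * volume B := by
          apply mul_le_mul_right
          exact le_trans hm.le (measure_mono hAB)
      _ ≤ ∑ j ∈ Finset.range K, volume (I j) := hnB
      _ ≤ 2 * V := hsum
  exact absurd hfinal (not_le.2 hn')

/-- Every function of bounded variation on `[a,b]` has a finitely
permeable graph. -/
theorem bounded_variation_finitely_permeable_graph
    (a b : ℝ) (hab : a ≤ b) (g : ℝ → ℝ)
    (hg : BoundedVariationOn g (Set.Icc a b)) :
    ∀ y : ℝ, ∀ δ : ℝ, 0 < δ →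
      ∃ f : ℝ → ℝ, f a = y ∧ f b = y ∧
        eVariationOn f (Set.Icc a b) < ENNReal.ofReal δ ∧
        {t ∈ Set.Icc a b | f t = g t}.Finite := by
  intro y δ hδ
  obtain ⟨c, hc, hcfin⟩ := exists_finite_level hab hg (show y - δ/4 < y + δ/4 by linarith)
  classical
  refine ⟨fun t => if a < t ∧ t < b then c else y, ?_, ?_, ?_, ?_⟩
  · simp
  · simp
  · calc eVariationOn (fun t => if a < t ∧ t < b then c else y) (Set.Icc a b)
        ≤ 2 * edist c y := step_evar_le a b y c
      _ = ENNReal.ofReal (2 * |c - y|) := by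
          rw [edist_dist, Real.dist_eq, ENNReal.ofReal_mul (by norm_num : (0:ℝ) ≤ 2),
            ENNReal.ofReal_ofNat]
      _ < ENNReal.ofReal δ := by
          apply (ENNReal.ofReal_lt_ofReal_iff hδ).2
          have h1 : |c - y| < δ/4 := abs_lt.2 ⟨by linarith [hc.1], by linarith [hc.2]⟩
          linarith
  · apply Set.Finite.subset (hcfin.union ((Set.finite_singleton b).insert a))
    rintro t ⟨ht, hft⟩
    by_cases h : a < t ∧ t < b
    · left
      have hft' : (if a < t ∧ t < b then c else y) = g t := hft
      rw [if_pos h] at hft'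
      exact ⟨ht, hft'.symm⟩
    · right
      rcases ht with ⟨h1, h2⟩
      rcases eq_or_lt_of_le h1 with h1' | h1'
      · exact Or.inl h1'.symm
      · push_neg at h
        have := le_antisymm h2 (h h1')
        exact Or.inr this
end

section
/- For a function g : [a,b] → ℝ of bounded variation, the level set g⁻¹({z}) is finite for Lebesgue-almost every z ∈ ℝ. -/
open Set MeasureTheory Filter
open scoped ENNReal

private lemma sum_eVar_le (g : ℝ → ℝ) (p : ℕ → ℝ) (hp : Monotone p) (n : ℕ) :
    ∑ i ∈ Finset.range n, eVariationOn g (Set.Icc (p i) (p (i+1))) ≤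
      eVariationOn g (Set.Icc (p 0) (p n)) := by
  induction n with
  | zero => simp
  | succ n ih =>
    rw [Finset.sum_range_succ]
    have h := eVariationOn.Icc_add_Icc g (s := Set.univ) (a := p 0) (b := p n) (c := p (n+1))
      (hp (Nat.zero_le n)) (hp (Nat.le_succ n)) (Set.mem_univ (p n))
    simp only [Set.univ_inter] at h
    calc ∑ i ∈ Finset.range n, eVariationOn g (Set.Icc (p i) (p (i+1)))
          + eVariationOn g (Set.Icc (p n) (p (n+1)))
        ≤ eVariationOn g (Set.Icc (p 0) (p n)) + eVariationOn g (Set.Icc (p n) (p (n+1))) :=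
          add_le_add ih le_rfl
      _ = _ := h

/-- consequence of Banach's indicatrix theorem. For a function of
bounded variation on `[a,b]`, the level set `g⁻¹({z})` is finite for Lebesgue-a.e. `z`. -/
theorem bounded_variation_level_sets_ae_finite
    (a b : ℝ) (g : ℝ → ℝ) (hg : BoundedVariationOn g (Set.Icc a b)) :
    ∀ᵐ z ∂(volume : Measure ℝ), {t ∈ Set.Icc a b | g t = z}.Finite := by
  rcases le_or_gt b a with hba | hab
  · filter_upwards with z
    apply Set.Finite.subset (Set.finite_singleton a)
    rintro x ⟨⟨h1, h2⟩, -⟩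
    exact le_antisymm (h2.trans hba) h1
  -- now a < b
  set V : ℝ≥0∞ := eVariationOn g (Set.Icc a b) with hVdef
  have hV : V ≠ ∞ := hg
  -- partition points
  set t : ℕ → ℕ → ℝ := fun n i => a + i * ((b - a) / n) with htdef
  have hc : ∀ n : ℕ, 0 < n → 0 < (b - a) / n := fun n hn =>
    div_pos (by linarith) (by exact_mod_cast hn)
  have ht0 : ∀ n : ℕ, t n 0 = a := by intro n; simp [htdef]
  have htn : ∀ n : ℕ, 0 < n → t n n = b := by
    intro n hn
    have : (n : ℝ) ≠ 0 := by exact_mod_cast hn.ne'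
    simp only [htdef]
    field_simp
    ring
  have htmono : ∀ n : ℕ, 0 < n → Monotone (t n) := by
    intro n hn i j hij
    have := (hc n hn).le
    simp only [htdef]
    have : (i : ℝ) ≤ j := by exact_mod_cast hij
    nlinarith [(hc n hn).le]
  have htstep : ∀ n i : ℕ, t n (i+1) - t n i = (b - a) / n := by
    intro n i
    simp only [htdef]
    push_cast
    ring
  set I : ℕ → ℕ → Set ℝ := fun n i => Set.Icc (t n i) (t n (i+1)) with hIdef
  have hIne : ∀ n : ℕ, 0 < n → ∀ i, (I n i).Nonempty := fun n hn i =>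
    Set.nonempty_Icc.2 (htmono n hn (Nat.le_succ i))
  have hIsub : ∀ n : ℕ, 0 < n → ∀ i < n, I n i ⊆ Set.Icc a b := by
    intro n hn i hi
    apply Set.Icc_subset_Icc
    · rw [← ht0 n]; exact htmono n hn (Nat.zero_le i)
    · rw [← htn n hn]; exact htmono n hn hi
  -- g image bounded
  have hdist : ∀ x ∈ Set.Icc a b, ∀ y ∈ Set.Icc a b, dist (g x) (g y) ≤ V.toReal := by
    intro x hx y hy
    have h := eVariationOn.edist_le g hx hy
    rw [edist_dist] at h
    have := ENNReal.toReal_mono hV h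
    rwa [ENNReal.toReal_ofReal dist_nonneg] at this
  have hbdd : ∀ n : ℕ, 0 < n → ∀ i < n, BddAbove (g '' I n i) ∧ BddBelow (g '' I n i) := by
    intro n hn i hi
    constructor
    · refine ⟨g a + V.toReal, ?_⟩
      rintro y ⟨x, hx, rfl⟩
      have := hdist x (hIsub n hn i hi hx) a (Set.left_mem_Icc.2 hab.le)
      rw [Real.dist_eq] at this
      have := abs_le.1 this
      linarith [this.2]
    · refine ⟨g a - V.toReal, ?_⟩
      rintro y ⟨x, hx, rfl⟩
      have := hdist x (hIsub n hn i hi hx) a (Set.left_mem_Icc.2 hab.le)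
      rw [Real.dist_eq] at this
      have := abs_le.1 this
      linarith [this.1]
  set m : ℕ → ℕ → ℝ := fun n i => sInf (g '' I n i) with hmdef
  set M : ℕ → ℕ → ℝ := fun n i => sSup (g '' I n i) with hMdef
  have hmem : ∀ n : ℕ, 0 < n → ∀ i < n, ∀ x ∈ I n i, g x ∈ Set.Icc (m n i) (M n i) := by
    intro n hn i hi x hx
    obtain ⟨hA, hB⟩ := hbdd n hn i hi
    exact ⟨csInf_le hB ⟨x, hx, rfl⟩, le_csSup hA ⟨x, hx, rfl⟩⟩
  set f : ℕ → ℝ → ℝ≥0∞ := fun n z =>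
    ∑ i ∈ Finset.range n, (Set.Icc (m n i) (M n i)).indicator 1 z with hfdef
  have hfmeas : ∀ n, Measurable (f n) := by
    intro n
    apply Finset.measurable_sum
    intro i _
    exact (measurable_const.indicator measurableSet_Icc)
  -- Step A : integral bound
  have hint : ∀ n : ℕ, ∫⁻ z, f n z ≤ V := by
    intro n
    rcases Nat.eq_zero_or_pos n with rfl | hn
    · simp [hfdef]
    have : ∫⁻ z, f n z = ∑ i ∈ Finset.range n, ENNReal.ofReal (M n i - m n i) := by
      simp only [hfdef]
      rw [lintegral_finset_sum (Finset.range n)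
        (f := fun i => (Set.Icc (m n i) (M n i)).indicator (1 : ℝ → ℝ≥0∞))
        (fun i _ => measurable_const.indicator measurableSet_Icc)]
      congr 1
      ext i
      rw [lintegral_indicator_one measurableSet_Icc, Real.volume_Icc]
    rw [this]
    have hterm : ∀ i < n, ENNReal.ofReal (M n i - m n i) ≤ eVariationOn g (I n i) := by
      intro i hi
      set W := eVariationOn g (I n i) with hWdef
      have hWV : W ≤ V := eVariationOn.mono g (hIsub n hn i hi)
      have hWne : W ≠ ∞ := ne_top_of_le_ne_top hV hWV
      have hMm : M n i - m n i ≤ W.toReal := by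
        have hne : (g '' I n i).Nonempty := (hIne n hn i).image g
        have h1 : M n i ≤ m n i + W.toReal := by
          apply csSup_le hne
          rintro y ⟨x, hx, rfl⟩
          have h2 : g x - W.toReal ≤ m n i := by
            apply le_csInf hne
            rintro y' ⟨x', hx', rfl⟩
            have h := eVariationOn.edist_le g hx hx'
            rw [edist_dist] at h
            have h2 := ENNReal.toReal_mono hWne h
            rw [ENNReal.toReal_ofReal dist_nonneg, Real.dist_eq] at h2
            have h3 := le_abs_self (g x - g x')
            linarith
          linarith
        linarith [h1]
      calc ENNReal.ofReal (M n i - m n i) ≤ ENNReal.ofReal W.toReal :=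
            ENNReal.ofReal_le_ofReal hMm
        _ = W := ENNReal.ofReal_toReal hWne
    calc ∑ i ∈ Finset.range n, ENNReal.ofReal (M n i - m n i)
        ≤ ∑ i ∈ Finset.range n, eVariationOn g (I n i) :=
          Finset.sum_le_sum (fun i hi => hterm i (Finset.mem_range.1 hi))
      _ ≤ eVariationOn g (Set.Icc (t n 0) (t n n)) := sum_eVar_le g (t n) (htmono n hn) n
      _ = V := by rw [ht0 n, htn n hn]
  -- Step C : liminf
  set F : ℝ → ℝ≥0∞ := fun z => liminf (fun n => f n z) atTop with hFdef
  have hFmeas : Measurable F := Measurable.liminf (fun n => hfmeas n)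
  have hFint : ∫⁻ z, F z ≠ ∞ := by
    apply ne_top_of_le_ne_top hV
    calc ∫⁻ z, F z ≤ liminf (fun n => ∫⁻ z, f n z) atTop := lintegral_liminf_le hfmeas
      _ ≤ liminf (fun _ : ℕ => V) atTop := liminf_le_liminf (Eventually.of_forall hint)
      _ = V := liminf_const V
  have hae := ae_lt_top hFmeas hFint
  filter_upwards [hae] with z hz
  -- Step D : if level set infinite, F z = ∞
  by_contra hinf
  replace hinf : Set.Infinite {t ∈ Set.Icc a b | g t = z} := hinf
  have hFtop : F z = ∞ := by
    have hk : ∀ k : ℕ, (k : ℝ≥0∞) ≤ F z := by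
      intro k
      classical
      obtain ⟨T, hTs, hTcard⟩ := hinf.exists_subset_card_eq k
      -- minimal gap
      obtain ⟨δ, hδ0, hδ⟩ : ∃ δ > 0, ∀ x ∈ T, ∀ y ∈ T, x ≠ y → δ ≤ |x - y| := by
        set D := ((T ×ˢ T).filter fun p => p.1 ≠ p.2).image fun p => |p.1 - p.2| with hDdef
        by_cases hD : D.Nonempty
        · refine ⟨D.min' hD, ?_, ?_⟩
          · obtain ⟨p, hp, hpv⟩ := Finset.mem_image.1 (D.min'_mem hD)
            rw [Finset.mem_filter] at hp
            exact lt_of_lt_of_eq (abs_pos.2 (sub_ne_zero.2 hp.2)) hpv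
          · intro x hx y hy hxy
            apply Finset.min'_le
            exact Finset.mem_image.2
              ⟨(x, y), Finset.mem_filter.2 ⟨Finset.mem_product.2 ⟨hx, hy⟩, hxy⟩, rfl⟩
        · refine ⟨1, one_pos, fun x hx y hy hxy => absurd ?_ hD⟩
          exact ⟨|x - y|, Finset.mem_image.2
            ⟨(x, y), Finset.mem_filter.2 ⟨Finset.mem_product.2 ⟨hx, hy⟩, hxy⟩, rfl⟩⟩
      have hev : ∀ᶠ n : ℕ in atTop, 0 < n ∧ (b - a) / n < δ := by
        have h1 : Tendsto (fun n : ℕ => (b - a) / n) atTop (nhds 0) :=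
          tendsto_const_div_atTop_nhds_zero_nat (b - a)
        exact (eventually_gt_atTop 0).and (h1.eventually (gt_mem_nhds hδ0))
      have hkf : ∀ n : ℕ, 0 < n → (b - a) / n < δ → (k : ℝ≥0∞) ≤ f n z := by
        intro n hn hmesh
        set c := (b - a) / n with hcdef
        have hcpos : 0 < c := hc n hn
        set φ : ℝ → ℕ := fun x => min (Nat.floor ((x - a) / c)) (n - 1) with hφdef
        have hφlt : ∀ x, φ x < n :=
          fun x => lt_of_le_of_lt (min_le_right _ _) (Nat.sub_lt hn one_pos)
        have hφmem : ∀ x ∈ Set.Icc a b, x ∈ I n (φ x) := by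
          intro x hx
          have hnonneg : 0 ≤ (x - a) / c := div_nonneg (by linarith [hx.1]) hcpos.le
          constructor
          · -- t n (φ x) ≤ x
            have h1 : (φ x : ℝ) ≤ (x - a) / c := by
              calc (φ x : ℝ) ≤ (Nat.floor ((x - a) / c) : ℝ) := by
                    exact_mod_cast min_le_left _ _
                _ ≤ (x - a) / c := Nat.floor_le hnonneg
            have h2 : (φ x : ℝ) * c ≤ x - a := (le_div_iff₀ hcpos).1 h1
            simp only [htdef]
            linarith
          · -- x ≤ t n (φ x + 1)
            rcases le_or_gt (n - 1) (Nat.floor ((x - a) / c)) with hcase | hcase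
            · have hφeq : φ x = n - 1 := min_eq_right hcase
              have hsucc : φ x + 1 = n := by omega
              have hb' : t n (φ x + 1) = b := by rw [hsucc]; exact htn n hn
              simp only [hIdef] at *
              rw [hb']
              exact hx.2
            · have hφeq : φ x = Nat.floor ((x - a) / c) := min_eq_left hcase.le
              have h1 : (x - a) / c < (φ x : ℝ) + 1 := by
                rw [hφeq]
                exact Nat.lt_floor_add_one _
              have h2 : x - a < ((φ x : ℝ) + 1) * c := (div_lt_iff₀ hcpos).1 h1
              simp only [htdef]
              push_cast
              linarith
        have hTsub : ∀ x ∈ T, x ∈ Set.Icc a b ∧ g x = z := by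
          intro x hx
          exact hTs hx
        have hinj : Set.InjOn φ T := by
          intro x hx y hy hxy
          by_contra hne
          have hx' := hφmem x (hTsub x hx).1
          have hy' := hφmem y (hTsub y hy).1
          rw [hxy] at hx'
          have hlen : t n (φ y + 1) - t n (φ y) = c := htstep n (φ y)
          have : |x - y| ≤ c := by
            rw [abs_le]
            constructor <;> [linarith [hx'.1, hx'.2, hy'.1, hy'.2]; skip]
            linarith [hx'.1, hx'.2, hy'.1, hy'.2]
          linarith [hδ x hx y hy hne]
        have hcardim : (T.image φ).card = k := by
          rw [Finset.card_image_of_injOn hinj, hTcard]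
        have hsubim : T.image φ ⊆ Finset.range n := by
          intro i hi
          rw [Finset.mem_image] at hi
          obtain ⟨x, _, rfl⟩ := hi
          exact Finset.mem_range.2 (hφlt x)
        have hone : ∀ i ∈ T.image φ,
            (Set.Icc (m n i) (M n i)).indicator (1 : ℝ → ℝ≥0∞) z = 1 := by
          intro i hi
          rw [Finset.mem_image] at hi
          obtain ⟨x, hx, rfl⟩ := hi
          have hzmem : z ∈ Set.Icc (m n (φ x)) (M n (φ x)) := by
            rw [← (hTsub x hx).2]
            exact hmem n hn (φ x) (hφlt x) x (hφmem x (hTsub x hx).1)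
          rw [Set.indicator_of_mem hzmem]
          rfl
        calc (k : ℝ≥0∞) = ∑ i ∈ T.image φ, (Set.Icc (m n i) (M n i)).indicator 1 z := by
              rw [show ∑ i ∈ T.image φ, (Set.Icc (m n i) (M n i)).indicator 1 z
                  = ∑ _i ∈ T.image φ, (1 : ℝ≥0∞) from Finset.sum_congr rfl hone,
                Finset.sum_const, hcardim, nsmul_eq_mul, mul_one]
          _ ≤ f n z := Finset.sum_le_sum_of_subset hsubim
      have : (k : ℝ≥0∞) = liminf (fun _ : ℕ => (k : ℝ≥0∞)) atTop := (liminf_const _).symm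
      rw [hFdef, this]
      exact liminf_le_liminf (hev.mono fun n hn => hkf n hn.1 hn.2)
    rw [eq_top_iff, ← ENNReal.iSup_natCast]
    exact iSup_le hk
  exact absurd hFtop hz.ne
end

section
/- Every polynomial function g : [a,b] → ℝ has a finitely permeable graph: for all y ∈ ℝ and δ > 0 there exists a function f : [a,b] → ℝ with f(a) = f(b) = y, total variation less than δ, and only finitely many points of intersection with g. -/
open Set
open scoped ENNReal NNReal

/-- Every polynomial function has a finitely permeable graph. -/
theorem polynomial_finitely_permeable_graph
    (a b : ℝ) (hab : a ≤ b) (p : Polynomial ℝ) :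
    ∀ y : ℝ, ∀ δ : ℝ, 0 < δ →
      ∃ f : ℝ → ℝ, f a = y ∧ f b = y ∧
        eVariationOn f (Set.Icc a b) < ENNReal.ofReal δ ∧
        {t ∈ Set.Icc a b | f t = p.eval t}.Finite := by
  intro y δ hδ
  by_cases hp : p = Polynomial.C y
  · rcases eq_or_lt_of_le hab with rfl | hlt
    · -- a = b : constant function
      refine ⟨fun _ => y, rfl, rfl, ?_, ?_⟩
      · rw [eVariationOn.constant_on (by
          intro u hu v hv
          simp_all [Set.mem_image])]
        exact ENNReal.ofReal_pos.mpr hδ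
      · exact (Set.finite_singleton a).subset (by
          intro t ht
          simp only [Set.mem_setOf_eq, Set.Icc_self, Set.mem_singleton_iff] at ht ⊢
          exact ht.1)
    · -- a < b : tent function
      set ε : ℝ := δ / (2 * (b - a)) with hε
      have hba : (0:ℝ) < b - a := sub_pos.mpr hlt
      have hεpos : 0 < ε := div_pos hδ (by positivity)
      refine ⟨fun t => y + ε * min (t - a) (b - t), ?_, ?_, ?_, ?_⟩
      · have hma : min (a - a) (b - a) = 0 := by
          rw [min_eq_left (by linarith)]; ring
        simp [hma]
        exact Or.inr hab
      · have hmb : min (b - a) (b - b) = 0 := by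
          rw [min_eq_right (by linarith)]; ring
        simp [hmb]
        exact Or.inr hab
      · -- variation bound via Lipschitz
        have hlip : LipschitzWith (Real.toNNReal ε) fun x : ℝ =>
            y + ε * min (x - a) (b - x) := by
          apply LipschitzWith.of_dist_le_mul
          intro x z
          have h1 : |min (x - a) (b - x) - min (z - a) (b - z)| ≤ |x - z| := by
            refine (abs_min_sub_min_le_max _ _ _ _).trans ?_
            have e1 : x - a - (z - a) = x - z := by ring
            have e2 : b - x - (b - z) = -(x - z) := by ring
            rw [e1, e2, abs_neg, max_self]
          have he : (y + ε * min (x - a) (b - x)) - (y + ε * min (z - a) (b - z))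
              = ε * (min (x - a) (b - x) - min (z - a) (b - z)) := by ring
          rw [Real.dist_eq, he, abs_mul, abs_of_pos hεpos,
            Real.coe_toNNReal _ hεpos.le, Real.dist_eq]
          exact mul_le_mul_of_nonneg_left h1 hεpos.le
        have hcomp := hlip.lipschitzOnWith (s := Set.Icc a b)
          |>.comp_eVariationOn_le (g := id) (s := Set.Icc a b) (Set.mapsTo_id _)
        have hid : eVariationOn (id : ℝ → ℝ) (Set.Icc a b) ≤ ENNReal.ofReal (b - a) := by
          have := MonotoneOn.eVariationOn_le (f := (id : ℝ → ℝ)) (s := Set.Icc a b)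
            (monotoneOn_id) (Set.left_mem_Icc.mpr hab) (Set.right_mem_Icc.mpr hab)
          rwa [Set.inter_self] at this
        have hcoe : ((Real.toNNReal ε : ℝ≥0) : ℝ≥0∞) = ENNReal.ofReal ε := rfl
        calc eVariationOn (fun t => y + ε * min (t - a) (b - t)) (Set.Icc a b)
            ≤ (Real.toNNReal ε : ℝ≥0) * eVariationOn (id : ℝ → ℝ) (Set.Icc a b) :=
              hcomp
          _ ≤ (Real.toNNReal ε : ℝ≥0) * ENNReal.ofReal (b - a) :=
              mul_le_mul_right hid _
          _ = ENNReal.ofReal (ε * (b - a)) := by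
              rw [hcoe, ← ENNReal.ofReal_mul hεpos.le]
          _ < ENNReal.ofReal δ := by
              rw [ENNReal.ofReal_lt_ofReal_iff hδ, hε]
              have : δ / (2 * (b - a)) * (b - a) = δ / 2 := by
                field_simp
              rw [this]
              linarith
      · -- finite intersection: only a and b
        apply ((Set.finite_singleton b).insert a).subset
        intro t ht
        simp only [Set.mem_setOf_eq, hp, Polynomial.eval_C] at ht
        obtain ⟨⟨hta, htb⟩, heq⟩ := ht
        have hm : min (t - a) (b - t) = 0 := by
          have : ε * min (t - a) (b - t) = 0 := by linarith
          exact (mul_eq_zero.mp this).resolve_left hεpos.ne'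
        rcases min_eq_iff.mp (hm ▸ rfl : min (t - a) (b - t) = min (t - a) (b - t)) with _ | _
        all_goals {
          rcases le_total (t - a) (b - t) with hc | hc
          · rw [min_eq_left hc] at hm
            left; linarith
          · rw [min_eq_right hc] at hm
            right; simp; linarith }
  · -- p ≠ C y : constant function works
    refine ⟨fun _ => y, rfl, rfl, ?_, ?_⟩
    · rw [eVariationOn.constant_on (by
        intro u hu v hv
        simp_all [Set.mem_image])]
      exact ENNReal.ofReal_pos.mpr hδ
    · have hne : p - Polynomial.C y ≠ 0 := sub_ne_zero.mpr hp
      apply (Polynomial.finite_setOf_isRoot hne).subset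
      intro t ht
      simp only [Set.mem_setOf_eq, Polynomial.IsRoot, Polynomial.eval_sub,
        Polynomial.eval_C] at ht ⊢
      linarith [ht.2]
end

section
/- There exists a dense G_δ set 𝒢 ⊆ C[0,1] (continuous functions with the supremum norm) such that for every g ∈ 𝒢, every y ∈ ℝ, and every δ > 0, there exists a function f : [0,1] → ℝ with f(0) = y, total variation V_0^1(f) < δ, and {t ∈ [0,1] : f(t) = g(t)} ⊆ {0}. -/
open Set
open scoped ENNReal

open Polynomial in
/-- Counting lemma: along a monotone sequence `u`, the number of indices where membership in
`{t | 0 < t ∧ q(t) < 0}` flips is at most `2 * natDegree q + 1`. -/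
lemma card_alternations_le (q : Polynomial ℝ) (hq : q ≠ 0) (u : ℕ → ℝ) (hu : Monotone u)
    (n : ℕ)
    [DecidablePred fun i =>
      ¬((0 < u i ∧ q.eval (u i) < 0) ↔ (0 < u (i + 1) ∧ q.eval (u (i + 1)) < 0))] :
    ((Finset.range n).filter fun i =>
      ¬((0 < u i ∧ q.eval (u i) < 0) ↔ (0 < u (i + 1) ∧ q.eval (u (i + 1)) < 0))).card
      ≤ 2 * q.natDegree + 1 := by
  classical
  set P : ℕ → Prop := fun i => 0 < u i ∧ q.eval (u i) < 0 with hP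
  set A : Finset ℕ := ((Finset.range n).filter fun i => ¬(P i ↔ P (i + 1))) with hA
  have hmemA : ∀ i ∈ A, ¬(P i ↔ P (i + 1)) := by
    intro i hi; exact (Finset.mem_filter.mp hi).2
  set A0 : Finset ℕ := A.filter (fun i => u i ≤ 0) with hA0
  set A1 : Finset ℕ := A.filter (fun i => 0 < u i) with hA1
  have hA01 : A ⊆ A0 ∪ A1 := by
    intro i hi
    rcases le_or_gt (u i) 0 with h | h
    · exact Finset.mem_union_left _ (Finset.mem_filter.mpr ⟨hi, h⟩)
    · exact Finset.mem_union_right _ (Finset.mem_filter.mpr ⟨hi, h⟩)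
  -- `A0` has at most one element
  have key0 : ∀ i ∈ A0, ∀ j ∈ A0, i < j → False := by
    intro i hi j hj hij
    obtain ⟨hiA, hi0⟩ := Finset.mem_filter.mp hi
    obtain ⟨hjA, hj0⟩ := Finset.mem_filter.mp hj
    have hPi : ¬ P i := fun h => absurd h.1 (not_lt.mpr hi0)
    have hPi1 : P (i + 1) := by
      by_contra h; exact hmemA i hiA (iff_of_false hPi h)
    have : (0 : ℝ) < u j := lt_of_lt_of_le hPi1.1 (hu (Nat.succ_le_of_lt hij))
    exact absurd this (not_lt.mpr hj0)
  have h0 : A0.card ≤ 1 := by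
    refine Finset.card_le_one.mpr ?_
    intro i hi j hj
    rcases lt_trichotomy i j with h | h | h
    · exact (key0 i hi j hj h).elim
    · exact h
    · exact (key0 j hj i hi h).elim
  -- each element of `A1` produces a root of `q` between `u i` and `u (i+1)`
  have hroot : ∀ i ∈ A1, ∃ s ∈ Icc (u i) (u (i + 1)), q.eval s = 0 := by
    intro i hi
    obtain ⟨hiA, hi0⟩ := Finset.mem_filter.mp hi
    have hle : u i ≤ u (i + 1) := hu (Nat.le_succ i)
    have hi10 : 0 < u (i + 1) := lt_of_lt_of_le hi0 hle
    have hne := hmemA i hiA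
    by_cases hc : q.eval (u i) < 0
    · have hPi : P i := ⟨hi0, hc⟩
      have hPi1 : ¬ P (i + 1) := fun h => hne (iff_of_true hPi h)
      have hc1 : 0 ≤ q.eval (u (i + 1)) := not_lt.mp (fun h => hPi1 ⟨hi10, h⟩)
      have hmem : (0 : ℝ) ∈ Icc (q.eval (u i)) (q.eval (u (i + 1))) := ⟨hc.le, hc1⟩
      obtain ⟨s, hs, hs0⟩ := intermediate_value_Icc hle q.continuous.continuousOn hmem
      exact ⟨s, hs, hs0⟩
    · have hPi : ¬ P i := fun h => hc h.2
      have hPi1 : P (i + 1) := by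
        by_contra h; exact hne (iff_of_false hPi h)
      have hmem : (0 : ℝ) ∈ Icc (q.eval (u (i + 1))) (q.eval (u i)) := ⟨hPi1.2.le, not_lt.mp hc⟩
      obtain ⟨s, hs, hs0⟩ := intermediate_value_Icc' hle q.continuous.continuousOn hmem
      exact ⟨s, hs, hs0⟩
  set φ : ℕ → ℝ := fun i =>
    if h : ∃ s ∈ Icc (u i) (u (i + 1)), q.eval s = 0 then h.choose else 0 with hφ
  have hφspec : ∀ i ∈ A1, φ i ∈ Icc (u i) (u (i + 1)) ∧ q.eval (φ i) = 0 := by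
    intro i hi
    have h := hroot i hi
    simp only [hφ, dif_pos h]
    exact h.choose_spec
  have hmaps : ∀ i ∈ A1, φ i ∈ q.roots.toFinset := by
    intro i hi
    exact Multiset.mem_toFinset.mpr (Polynomial.mem_roots'.mpr ⟨hq, (hφspec i hi).2⟩)
  have hfib : ∀ b ∈ q.roots.toFinset, (A1.filter fun i => φ i = b).card ≤ 2 := by
    intro b _
    by_contra hgt
    push_neg at hgt
    obtain ⟨i, j, k, hi, hj, hk, hij, hik, hjk⟩ := Finset.two_lt_card_iff.mp hgt
    have key : ∀ x y z, x ∈ A1.filter (fun i => φ i = b) → y ∈ A1.filter (fun i => φ i = b) →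
        z ∈ A1.filter (fun i => φ i = b) → x < y → y < z → False := by
      intro x y z hx hy hz hxy hyz
      obtain ⟨hx1, hxb⟩ := Finset.mem_filter.mp hx
      obtain ⟨hy1, hyb⟩ := Finset.mem_filter.mp hy
      obtain ⟨hz1, hzb⟩ := Finset.mem_filter.mp hz
      have hxs := (hφspec x hx1).1
      have hys := (hφspec y hy1).1
      have hzs := (hφspec z hz1).1
      rw [hxb] at hxs
      rw [hyb] at hys
      rw [hzb] at hzs
      -- b ≤ u (x+1) ≤ u y ≤ b  and  u (y+1) ≤ u z ≤ b ≤ u (y+1)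
      have h1 : u y = b :=
        le_antisymm hys.1 (hxs.2.trans (hu (Nat.succ_le_of_lt hxy)))
      have h2 : u (y + 1) = b :=
        le_antisymm ((hu (Nat.succ_le_of_lt hyz)).trans hzs.1) hys.2
      have hPyy : P y ↔ P (y + 1) := by
        simp only [hP]
        rw [show u (y + 1) = u y from h2.trans h1.symm]
      exact hmemA y (Finset.mem_filter.mp hy1).1 hPyy
    rcases lt_trichotomy i j with h1 | h1 | h1
    · rcases lt_trichotomy j k with h2 | h2 | h2
      · exact key i j k hi hj hk h1 h2
      · exact hjk h2
      · rcases lt_trichotomy i k with h3 | h3 | h3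
        · exact key i k j hi hk hj h3 h2
        · exact hik h3
        · exact key k i j hk hi hj h3 h1
    · exact hij h1
    · rcases lt_trichotomy i k with h2 | h2 | h2
      · exact key j i k hj hi hk h1 h2
      · exact hik h2
      · rcases lt_trichotomy j k with h3 | h3 | h3
        · exact key j k i hj hk hi h3 h2
        · exact hjk h3
        · exact key k j i hk hj hi h3 h1
  have h1 : A1.card ≤ 2 * q.roots.toFinset.card :=
    Finset.card_le_mul_card_image_of_maps_to hmaps 2 hfib
  have hcard : q.roots.toFinset.card ≤ q.natDegree :=
    le_trans (Multiset.toFinset_card_le _) (Polynomial.card_roots' q)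
  calc A.card ≤ (A0 ∪ A1).card := Finset.card_le_card hA01
    _ ≤ A0.card + A1.card := Finset.card_union_le _ _
    _ ≤ 1 + 2 * q.natDegree := by
        have := le_trans h1 (Nat.mul_le_mul_left 2 hcard)
        omega
    _ = 2 * q.natDegree + 1 := by omega

set_option maxHeartbeats 2000000 in
/-- There is a dense `Gδ` set `𝒢` in `C[0,1]` such that every `g ∈ 𝒢`
can, for every `y` and `δ > 0`, be avoided (except possibly at `0`) by a function `f`
with `f 0 = y` and total variation `< δ`. -/
theorem typical_continuous_function_avoidable :
    ∃ 𝒢 : Set C(Set.Icc (0:ℝ) 1, ℝ), Dense 𝒢 ∧ IsGδ 𝒢 ∧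
      ∀ g ∈ 𝒢, ∀ y : ℝ, ∀ δ : ℝ, 0 < δ →
        ∃ f : ℝ → ℝ, f 0 = y ∧
          eVariationOn f (Set.Icc 0 1) < ENNReal.ofReal δ ∧
          ∀ t : Set.Icc (0:ℝ) 1, f t = g t → (t : ℝ) = 0 := by
  classical
  set W : ℕ → Set C(Set.Icc (0:ℝ) 1, ℝ) := fun m =>
    ⋃ p : Polynomial ℝ, Metric.ball (p.toContinuousMapOn (Set.Icc (0:ℝ) 1))
      (1 / (16 * ((m : ℝ) + 1) * ((p.natDegree : ℝ) + 1))) with hW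
  have hWopen : ∀ m, IsOpen (W m) := fun m => isOpen_iUnion fun p => Metric.isOpen_ball
  have hpolysub : ∀ m, (polynomialFunctions (Set.Icc (0:ℝ) 1) : Set C(Set.Icc (0:ℝ) 1, ℝ)) ⊆ W m := by
    intro m x hx
    rw [polynomialFunctions_coe] at hx
    obtain ⟨p, rfl⟩ := hx
    refine Set.mem_iUnion.mpr ⟨p, ?_⟩
    exact Metric.mem_ball_self (by positivity)
  have hpolydense : Dense (polynomialFunctions (Set.Icc (0:ℝ) 1) : Set C(Set.Icc (0:ℝ) 1, ℝ)) := by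
    have h := polynomialFunctions_closure_eq_top 0 1
    rw [dense_iff_closure_eq, ← Subalgebra.topologicalClosure_coe, h]
    rfl
  refine ⟨⋂ m, W m, ?_, ?_, ?_⟩
  · exact dense_iInter_of_isOpen hWopen fun m => (hpolydense.mono (hpolysub m))
  · exact IsGδ.iInter_of_isOpen hWopen
  · intro g hg y δ hδ
    obtain ⟨m, hm⟩ := exists_nat_one_div_lt hδ
    obtain ⟨p, hp⟩ := Set.mem_iUnion.mp (Set.mem_iInter.mp hg m)
    set d : ℕ := p.natDegree with hd
    set e : ℝ := 1 / (16 * ((m : ℝ) + 1) * ((d : ℝ) + 1)) with he'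
    have he : 0 < e := by rw [he']; positivity
    have hdist : ∀ x : Set.Icc (0:ℝ) 1, |g x - p.eval ↑x| < e := by
      have h1 : dist g (p.toContinuousMapOn (Set.Icc (0:ℝ) 1)) < e := Metric.mem_ball.mp hp
      have h2 := (ContinuousMap.dist_lt_iff he).mp h1
      intro x
      have h3 := h2 x
      rwa [Real.dist_eq, Polynomial.toContinuousMapOn_apply, Polynomial.toContinuousMap_apply] at h3
    set q : Polynomial ℝ := (p - Polynomial.C y) ^ 2 - Polynomial.C ((2 * e) ^ 2) with hqdef
    have hqe : ∀ t : ℝ, q.eval t = (p.eval t - y) ^ 2 - (2 * e) ^ 2 := by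
      intro t; simp [hqdef]
    set f : ℝ → ℝ := fun t => if 0 < t ∧ q.eval t < 0 then y + 4 * e else y with hf
    refine ⟨f, ?_, ?_, ?_⟩
    · simp [hf]
    · -- variation bound
      by_cases hq0 : q = 0
      · have hfc : f = fun _ => y := by
          funext t
          simp only [hf]
          refine if_neg ?_
          rintro ⟨-, h⟩
          rw [hq0] at h
          simp at h
        rw [hfc]
        have hzero : eVariationOn (fun _ : ℝ => y) (Set.Icc 0 1) = 0 := by
          refine eVariationOn.constant_on ?_
          rintro a ⟨x, -, rfl⟩ b ⟨z, -, rfl⟩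
          rfl
        rw [hzero]
        exact ENNReal.ofReal_pos.mpr hδ
      · have hdegq : q.natDegree ≤ 2 * d := by
          have h1 : (p - Polynomial.C y).natDegree ≤ d := by
            refine le_trans (Polynomial.natDegree_sub_le _ _) ?_
            simp [Polynomial.natDegree_C, hd]
          have h2 : ((p - Polynomial.C y) ^ 2).natDegree ≤ 2 * d := by
            rw [Polynomial.natDegree_pow]
            omega
          refine le_trans (Polynomial.natDegree_sub_le _ _) ?_
          rw [Polynomial.natDegree_C]
          simpa using h2
        have key : eVariationOn f (Set.Icc 0 1) ≤ ENNReal.ofReal (1 / ((m : ℝ) + 1)) := by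
          unfold eVariationOn
          refine iSup_le ?_
          rintro ⟨n, u, hu, hus⟩
          simp only
          set A : Finset ℕ := ((Finset.range n).filter fun i =>
            ¬((0 < u i ∧ q.eval (u i) < 0) ↔ (0 < u (i + 1) ∧ q.eval (u (i + 1)) < 0))) with hA
          have hsum : ∑ i ∈ Finset.range n, edist (f (u (i + 1))) (f (u i))
              = ∑ i ∈ A, edist (f (u (i + 1))) (f (u i)) := by
            refine (Finset.sum_subset (Finset.filter_subset _ _) ?_).symm
            intro i hi hiA
            have hiff : (0 < u i ∧ q.eval (u i) < 0) ↔ (0 < u (i + 1) ∧ q.eval (u (i + 1)) < 0) := by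
              by_contra h
              exact hiA (Finset.mem_filter.mpr ⟨hi, h⟩)
            have heq : f (u (i + 1)) = f (u i) := by
              simp only [hf]
              by_cases h1 : 0 < u i ∧ q.eval (u i) < 0
              · rw [if_pos h1, if_pos (hiff.mp h1)]
              · rw [if_neg h1, if_neg (fun h => h1 (hiff.mpr h))]
            rw [heq, edist_self]
          rw [hsum]
          have hterm : ∀ i ∈ A, edist (f (u (i + 1))) (f (u i)) ≤ ENNReal.ofReal (4 * e) := by
            intro i _
            rw [edist_dist]
            refine ENNReal.ofReal_le_ofReal ?_
            have hfv : ∀ x : ℝ, f x = y ∨ f x = y + 4 * e := by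
              intro x
              simp only [hf]
              by_cases h : 0 < x ∧ q.eval x < 0
              · right; rw [if_pos h]
              · left; rw [if_neg h]
            rw [Real.dist_eq]
            rcases hfv (u (i + 1)) with h1 | h1 <;> rcases hfv (u i) with h2 | h2 <;>
                rw [h1, h2] <;>
              · rw [abs_le]; constructor <;> nlinarith [he.le]
          have hcardA : A.card ≤ 2 * q.natDegree + 1 := card_alternations_le q hq0 u hu n
          calc ∑ i ∈ A, edist (f (u (i + 1))) (f (u i))
              ≤ ∑ _i ∈ A, ENNReal.ofReal (4 * e) := Finset.sum_le_sum hterm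
            _ = (A.card : ℝ≥0∞) * ENNReal.ofReal (4 * e) := by
                rw [Finset.sum_const, nsmul_eq_mul]
            _ ≤ ((2 * (2 * d) + 1 : ℕ) : ℝ≥0∞) * ENNReal.ofReal (4 * e) := by
                refine mul_le_mul_left ?_ _
                refine Nat.cast_le.mpr ?_
                refine le_trans hcardA ?_
                omega
            _ = ENNReal.ofReal (((2 * (2 * d) + 1 : ℕ) : ℝ) * (4 * e)) := by
                rw [← ENNReal.ofReal_natCast (2 * (2 * d) + 1),
                  ← ENNReal.ofReal_mul (by positivity)]
            _ ≤ ENNReal.ofReal (1 / ((m : ℝ) + 1)) := by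
                refine ENNReal.ofReal_le_ofReal ?_
                have hM : (0:ℝ) < (m:ℝ) + 1 := by positivity
                have hK : (0:ℝ) < 16 * ((m:ℝ)+1) * ((d:ℝ)+1) := by positivity
                rw [he', le_div_iff₀ hM]
                have heq2 : ((2 * (2 * d) + 1 : ℕ) : ℝ) *
                    (4 * (1 / (16 * ((m:ℝ)+1) * ((d:ℝ)+1)))) * ((m:ℝ)+1)
                    = (((2 * (2 * d) + 1 : ℕ) : ℝ) * 4 * ((m:ℝ)+1))
                      / (16 * ((m:ℝ)+1) * ((d:ℝ)+1)) := by ring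
                rw [heq2, div_le_one hK]
                have hd4 : ((2 * (2 * d) + 1 : ℕ) : ℝ) = 4 * (d:ℝ) + 1 := by push_cast; ring
                rw [hd4]
                nlinarith [Nat.cast_nonneg (α := ℝ) d, Nat.cast_nonneg (α := ℝ) m]
        exact lt_of_le_of_lt key ((ENNReal.ofReal_lt_ofReal_iff hδ).mpr hm)
    · -- avoidance
      clear_value e q f
      intro t hft
      by_contra ht0
      have htpos : 0 < (t : ℝ) := lt_of_le_of_ne t.2.1 (Ne.symm ht0)
      have hgt := hdist t
      by_cases hc : q.eval ↑t < 0
      · have hfe : f ↑t = y + 4 * e := by simp only [hf]; exact if_pos ⟨htpos, hc⟩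
        rw [hqe] at hc
        have habs := abs_lt.mp hgt
        have hgval : g t = y + 4 * e := by rw [← hft, hfe]
        rw [hgval] at habs
        nlinarith [habs.1, habs.2, hc, he, sq_nonneg (p.eval ↑t - y - 2 * e),
          sq_nonneg (p.eval ↑t - y + 2 * e)]
      · have hfe : f ↑t = y := by
          simp only [hf]; exact if_neg (fun h => hc h.2)
        have hgy : g t = y := by rw [← hft, hfe]
        refine hc ?_
        rw [hqe]
        rw [hgy] at hgt
        have habs := abs_lt.mp hgt
        have h1 : (p.eval ↑t - y) ^ 2 < e ^ 2 :=
          sq_lt_sq' (by linarith [habs.2]) (by linarith [habs.1])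
        have h2 : e ^ 2 < (2 * e) ^ 2 := by nlinarith [he]
        linarith [h1, h2]
end

section
/- The set of continuous functions on [0,1] having a permeable graph contains a dense G_δ subset of C[0,1]; in particular, the typical continuous function has a permeable graph. -/
open Set
open scoped ENNReal

noncomputable section PermeableAux

abbrev XX := C(Set.Icc (0:ℝ) 1, ℝ)

/-- extension of `g` to all of `ℝ` -/
def ExtQ (g : XX) (t : ℝ) : ℝ := g (Set.projIcc 0 1 zero_le_one t)

lemma ext_continuous (g : XX) : Continuous (ExtQ g) :=
  g.continuous.comp continuous_projIcc

lemma ext_apply_of_mem (g : XX) {t : ℝ} (h : t ∈ Icc (0:ℝ) 1) :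
    ExtQ g t = g ⟨t, h⟩ := by
  simp [ExtQ, Set.projIcc_of_mem zero_le_one h]

/-- the `i`-th cell of the `K`-grid -/
def cellI (K i : ℕ) : Set ℝ := Icc ((i:ℝ)/K) (((i:ℝ)+1)/K)

lemma cellI_nonempty (K i : ℕ) : (cellI K i).Nonempty := by
  rcases Nat.eq_zero_or_pos K with h | h
  · subst h; exact ⟨0, by simp [cellI]⟩
  · refine ⟨(i:ℝ)/K, le_rfl, ?_⟩
    have hK : (0:ℝ) < K := by exact_mod_cast h
    rw [div_le_div_iff_of_pos_right hK]
    linarith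

lemma cellI_subset {K i : ℕ} (hK : 0 < K) (hi : i < K) : cellI K i ⊆ Icc (0:ℝ) 1 := by
  intro t ht
  obtain ⟨h1, h2⟩ := ht
  constructor
  · exact le_trans (by positivity) h1
  · refine le_trans h2 ?_
    rw [div_le_one (by exact_mod_cast hK)]
    exact_mod_cast hi

def Mx (g : XX) (K i : ℕ) : ℝ := sSup (ExtQ g '' cellI K i)
def mnn (g : XX) (K i : ℕ) : ℝ := sInf (ExtQ g '' cellI K i)

lemma image_cell_nonempty (g : XX) (K i : ℕ) : (ExtQ g '' cellI K i).Nonempty :=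
  (cellI_nonempty K i).image _

lemma image_cell_bddAbove (g : XX) (K i : ℕ) : BddAbove (ExtQ g '' cellI K i) :=
  ((isCompact_Icc).image (ext_continuous g)).bddAbove

lemma image_cell_bddBelow (g : XX) (K i : ℕ) : BddBelow (ExtQ g '' cellI K i) :=
  ((isCompact_Icc).image (ext_continuous g)).bddBelow

lemma le_Mx (g : XX) {K i : ℕ} {t : ℝ} (ht : t ∈ cellI K i) : ExtQ g t ≤ Mx g K i :=
  le_csSup (image_cell_bddAbove g K i) (mem_image_of_mem _ ht)

lemma mnn_le (g : XX) {K i : ℕ} {t : ℝ} (ht : t ∈ cellI K i) : mnn g K i ≤ ExtQ g t :=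
  csInf_le (image_cell_bddBelow g K i) (mem_image_of_mem _ ht)

lemma Mx_le (g : XX) {K i : ℕ} {a : ℝ} (h : ∀ t ∈ cellI K i, ExtQ g t ≤ a) : Mx g K i ≤ a :=
  csSup_le (image_cell_nonempty g K i) (by rintro x ⟨t, ht, rfl⟩; exact h t ht)

lemma le_mnn (g : XX) {K i : ℕ} {a : ℝ} (h : ∀ t ∈ cellI K i, a ≤ ExtQ g t) : a ≤ mnn g K i :=
  le_csInf (image_cell_nonempty g K i) (by rintro x ⟨t, ht, rfl⟩; exact h t ht)

lemma exists_lt_Mx (g : XX) {K i : ℕ} {a : ℝ} (h : a < Mx g K i) :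
    ∃ t ∈ cellI K i, a < ExtQ g t := by
  obtain ⟨x, hx, hax⟩ := exists_lt_of_lt_csSup (image_cell_nonempty g K i) h
  obtain ⟨t, ht, rfl⟩ := hx
  exact ⟨t, ht, hax⟩

lemma exists_mnn_lt (g : XX) {K i : ℕ} {a : ℝ} (h : mnn g K i < a) :
    ∃ t ∈ cellI K i, ExtQ g t < a := by
  obtain ⟨x, hx, hax⟩ := exists_lt_of_csInf_lt (image_cell_nonempty g K i) h
  obtain ⟨t, ht, rfl⟩ := hx
  exact ⟨t, ht, hax⟩

lemma ext_dist_le (g q : XX) (t : ℝ) : |ExtQ g t - ExtQ q t| ≤ dist g q := by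
  have := ContinuousMap.dist_apply_le_dist (f := g) (g := q) (Set.projIcc 0 1 zero_le_one t)
  rwa [Real.dist_eq] at this

lemma Mx_le_Mx_add (g q : XX) (K i : ℕ) : Mx g K i ≤ Mx q K i + dist g q := by
  refine Mx_le g fun t ht => ?_
  have h1 := ext_dist_le g q t
  have h2 := le_Mx q ht
  have := abs_le.1 h1
  linarith [this.2]

lemma mnn_sub_le (g q : XX) (K i : ℕ) : mnn q K i - dist g q ≤ mnn g K i := by
  refine le_mnn g fun t ht => ?_
  have h1 := ext_dist_le g q t
  have h2 := mnn_le q ht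
  have := abs_le.1 h1
  linarith [this.1]

/-- the crossing-cost functional -/
def Sm (g : XX) (K : ℕ) (y : ℝ) : ℝ :=
  ∑ i ∈ Finset.range K, max 0 (min (Mx g K i - y) (y - mnn g K i))

def PP (g : XX) (ε : ℝ) : Prop := ∃ K : ℕ, 0 < K ∧ ∀ y : ℝ, Sm g K y < ε

lemma Sm_le_Sm_add (g q : XX) (K : ℕ) (y : ℝ) :
    Sm g K y ≤ Sm q K y + K * (2 * dist g q) := by
  have hd : (0:ℝ) ≤ dist g q := dist_nonneg
  have step : ∀ i ∈ Finset.range K,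
      max 0 (min (Mx g K i - y) (y - mnn g K i)) ≤
        max 0 (min (Mx q K i - y) (y - mnn q K i)) + 2 * dist g q := by
    intro i _
    have h1 := Mx_le_Mx_add g q K i
    have h2 := mnn_sub_le g q K i
    have hmin : min (Mx g K i - y) (y - mnn g K i) ≤
        min (Mx q K i - y) (y - mnn q K i) + 2 * dist g q := by
      rw [← min_add_add_right]
      exact le_min (le_trans (min_le_left _ _) (by linarith))
        (le_trans (min_le_right _ _) (by linarith))
    calc max 0 (min (Mx g K i - y) (y - mnn g K i))
        ≤ max 0 (min (Mx q K i - y) (y - mnn q K i) + 2 * dist g q) :=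
          max_le_max le_rfl hmin
      _ ≤ max 0 (min (Mx q K i - y) (y - mnn q K i)) + 2 * dist g q := by
          rw [← max_add_add_right]
          exact max_le_max (by linarith) le_rfl
  calc Sm g K y ≤ ∑ i ∈ Finset.range K,
        (max 0 (min (Mx q K i - y) (y - mnn q K i)) + 2 * dist g q) :=
        Finset.sum_le_sum step
    _ = Sm q K y + K * (2 * dist g q) := by
        rw [Finset.sum_add_distrib, Finset.sum_const, Finset.card_range, nsmul_eq_mul, Sm]



lemma evar_const (c : ℝ) (s : Set ℝ) : eVariationOn (fun _ => c) s = 0 :=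
  eVariationOn.constant_on (by
    rintro x ⟨t, _, rfl⟩ y ⟨u, _, rfl⟩; rfl)

lemma evar_add_le (f g : ℝ → ℝ) (s : Set ℝ) :
    eVariationOn (fun t => f t + g t) s ≤ eVariationOn f s + eVariationOn g s := by
  apply iSup_le
  rintro ⟨n, u, hu, us⟩
  calc ∑ i ∈ Finset.range n, edist (f (u (i+1)) + g (u (i+1))) (f (u i) + g (u i))
      ≤ ∑ i ∈ Finset.range n,
          (edist (f (u (i+1))) (f (u i)) + edist (g (u (i+1))) (g (u i))) :=
        Finset.sum_le_sum fun i _ => edist_add_add_le _ _ _ _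
    _ = ∑ i ∈ Finset.range n, edist (f (u (i+1))) (f (u i))
        + ∑ i ∈ Finset.range n, edist (g (u (i+1))) (g (u i)) := Finset.sum_add_distrib
    _ ≤ _ := add_le_add (eVariationOn.sum_le (f := f) (n := n) hu us) (eVariationOn.sum_le (f := g) (n := n) hu us)

lemma evar_neg (f : ℝ → ℝ) (s : Set ℝ) :
    eVariationOn (fun t => -(f t)) s = eVariationOn f s := by
  unfold eVariationOn
  congr 1
  funext p
  congr 1
  funext i
  rw [edist_neg_neg]

lemma evar_sum_le (F : ℕ → ℝ → ℝ) (m : ℕ) (s : Set ℝ) :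
    eVariationOn (fun t => ∑ i ∈ Finset.range m, F i t) s
      ≤ ∑ i ∈ Finset.range m, eVariationOn (F i) s := by
  induction m with
  | zero => simp [evar_const]
  | succ m ih =>
      have : (fun t => ∑ i ∈ Finset.range (m+1), F i t)
          = fun t => (∑ i ∈ Finset.range m, F i t) + F m t := by
        funext t; rw [Finset.sum_range_succ]
      rw [this, Finset.sum_range_succ]
      exact le_trans (evar_add_le _ _ s) (add_le_add ih le_rfl)

lemma evar_stepIoi (a c : ℝ) :
    eVariationOn (fun t => if a < t then c else 0) (Icc (0:ℝ) 1)
      ≤ ENNReal.ofReal |c| := by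
  rcases le_total 0 c with hc | hc
  · have hmono : MonotoneOn (fun t => if a < t then c else 0) (Icc (0:ℝ) 1) := by
      intro s _ t _ hst
      dsimp only
      split_ifs with h1 h2 h2
      · exact le_rfl
      · exact absurd (lt_of_lt_of_le h1 hst) h2
      · exact hc
      · exact le_rfl
    have := hmono.eVariationOn_le (a := 0) (b := 1) (by simp) (by simp)
    rw [Set.inter_self] at this
    refine le_trans this (ENNReal.ofReal_le_ofReal ?_)
    have h0 : (if a < (0:ℝ) then c else 0) = if a < (0:ℝ) then c else 0 := rfl
    split_ifs with h1 h2 h2 <;> simp [abs_of_nonneg hc] <;> linarith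
  · rw [show (fun t => if a < t then c else 0)
        = (fun t => -(if a < t then -c else 0)) by funext t; split_ifs <;> simp]
    rw [evar_neg]
    have hmono : MonotoneOn (fun t => if a < t then -c else 0) (Icc (0:ℝ) 1) := by
      intro s _ t _ hst
      dsimp only
      split_ifs with h1 h2 h2
      · exact le_rfl
      · exact absurd (lt_of_lt_of_le h1 hst) h2
      · linarith
      · exact le_rfl
    have := hmono.eVariationOn_le (a := 0) (b := 1) (by simp) (by simp)
    rw [Set.inter_self] at this
    refine le_trans this (ENNReal.ofReal_le_ofReal ?_)
    split_ifs <;> simp [abs_of_nonpos hc] <;> linarith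

lemma evar_stepIci (a c : ℝ) :
    eVariationOn (fun t => if a ≤ t then c else 0) (Icc (0:ℝ) 1)
      ≤ ENNReal.ofReal |c| := by
  rcases le_total 0 c with hc | hc
  · have hmono : MonotoneOn (fun t => if a ≤ t then c else 0) (Icc (0:ℝ) 1) := by
      intro c' _ t _ hst
      dsimp only
      split_ifs with h1 h2 h2
      · exact le_rfl
      · exact absurd (le_trans h1 hst) h2
      · exact hc
      · exact le_rfl
    have := hmono.eVariationOn_le (a := 0) (b := 1) (by simp) (by simp)
    rw [Set.inter_self] at this
    refine le_trans this (ENNReal.ofReal_le_ofReal ?_)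
    split_ifs <;> simp [abs_of_nonneg hc] <;> linarith
  · rw [show (fun t => if a ≤ t then c else 0)
        = (fun t => -(if a ≤ t then -c else 0)) by funext t; split_ifs <;> simp]
    rw [evar_neg]
    have hmono : MonotoneOn (fun t => if a ≤ t then -c else 0) (Icc (0:ℝ) 1) := by
      intro c' _ t _ hst
      dsimp only
      split_ifs with h1 h2 h2
      · exact le_rfl
      · exact absurd (le_trans h1 hst) h2
      · linarith
      · exact le_rfl
    have := hmono.eVariationOn_le (a := 0) (b := 1) (by simp) (by simp)
    rw [Set.inter_self] at this
    refine le_trans this (ENNReal.ofReal_le_ofReal ?_)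
    split_ifs <;> simp [abs_of_nonpos hc] <;> linarith

lemma construct (g : XX) (y δ : ℝ) (hδ : 0 < δ) (K : ℕ) (hK : 0 < K)
    (hS : Sm g K y < δ / 8) :
    ∃ f : ℝ → ℝ, f 0 = y ∧ f 1 = y ∧
      eVariationOn f (Set.Icc 0 1) < ENNReal.ofReal δ ∧
      (closure {t : ℝ | ∃ h : t ∈ Set.Icc (0:ℝ) 1, f t = g ⟨t, h⟩}).Countable := by
  have hKR : (0:ℝ) < K := by exact_mod_cast hK
  set ε' : ℝ := δ / (8 * (K+1)) with hε'def
  have hε' : 0 < ε' := by positivity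
  set c : ℕ → ℝ := fun i => if mnn g K i ≤ y ∧ y ≤ Mx g K i then
      (if Mx g K i - y ≤ y - mnn g K i then Mx g K i + ε' - y else mnn g K i - ε' - y)
    else 0 with hcdef
  set f : ℝ → ℝ := fun t => y + ∑ i ∈ Finset.range K,
      ((if (i:ℝ)/K < t then c i else 0) - (if ((i:ℝ)+1)/K ≤ t then c i else 0)) with hfdef
  have habs : ∀ i ∈ Finset.range K,
      |c i| ≤ max 0 (min (Mx g K i - y) (y - mnn g K i)) + ε' := by
    intro i _
    rw [hcdef]
    dsimp only
    split_ifs with h1 h2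
    · have h3 : 0 ≤ Mx g K i - y := by linarith [h1.2]
      rw [abs_of_nonneg (by linarith)]
      rw [max_eq_right (le_min h3 (by linarith [h1.1]))]
      rw [min_eq_left h2]
      linarith
    · have h3 : 0 ≤ y - mnn g K i := by linarith [h1.1]
      rw [abs_of_nonpos (by linarith)]
      rw [max_eq_right (le_min (by linarith [h1.2]) h3)]
      rw [min_eq_right (by linarith)]
      linarith
    · simp only [abs_zero]
      exact add_nonneg (le_max_left 0 _) hε'.le
  have hsumabs : ∑ i ∈ Finset.range K, |c i| < δ / 4 := by
    have h1 : ∑ i ∈ Finset.range K, |c i|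
        ≤ Sm g K y + K * ε' := by
      rw [Sm]
      calc ∑ i ∈ Finset.range K, |c i|
          ≤ ∑ i ∈ Finset.range K,
            (max 0 (min (Mx g K i - y) (y - mnn g K i)) + ε') := Finset.sum_le_sum habs
        _ = _ := by rw [Finset.sum_add_distrib, Finset.sum_const, Finset.card_range,
            nsmul_eq_mul]
    have h2 : (K:ℝ) * ε' ≤ δ / 8 := by
      rw [hε'def, mul_div_assoc']
      rw [div_le_div_iff₀ (by positivity) (by norm_num)]
      nlinarith
    linarith
  -- endpoint values
  have hf0 : f 0 = y := by
    rw [hfdef]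
    dsimp only
    rw [Finset.sum_eq_zero, add_zero]
    intro i _
    have hA : ¬((i:ℝ)/K < 0) := not_lt.2 (by positivity)
    have hB : ¬(((i:ℝ)+1)/K ≤ 0) := not_le.2 (by positivity)
    simp [hA, hB]
  have hf1 : f 1 = y := by
    rw [hfdef]
    dsimp only
    rw [Finset.sum_eq_zero, add_zero]
    intro i hi
    rw [Finset.mem_range] at hi
    have hA : (i:ℝ)/K < 1 := by
      rw [div_lt_one hKR]; exact_mod_cast hi
    have hB : ((i:ℝ)+1)/K ≤ 1 := by
      rw [div_le_one hKR]; exact_mod_cast hi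
    simp [hA, hB]
  -- value on open cells
  have hcell : ∀ i : ℕ, i < K → ∀ t : ℝ, (i:ℝ)/K < t → t < ((i:ℝ)+1)/K →
      f t = y + c i := by
    intro i hi t ht1 ht2
    rw [hfdef]
    dsimp only
    congr 1
    rw [Finset.sum_eq_single_of_mem i (Finset.mem_range.2 hi)]
    · have hA : (i:ℝ)/K < t := ht1
      have hB : ¬(((i:ℝ)+1)/K ≤ t) := not_le.2 ht2
      simp [hA, hB]
    · intro j _ hji
      rcases lt_or_gt_of_ne hji with hj | hj
      · have hB : ((j:ℝ)+1)/K ≤ t := by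
          refine le_trans ?_ (le_of_lt ht1)
          rw [div_le_div_iff_of_pos_right hKR]
          have : (j:ℝ) + 1 ≤ (i:ℝ) := by exact_mod_cast hj
          linarith
        have hA' : (j:ℝ)/K < t := by
          refine lt_of_le_of_lt ?_ ht1
          rw [div_le_div_iff_of_pos_right hKR]
          have : (j:ℝ) ≤ (i:ℝ) := by exact_mod_cast le_of_lt hj
          linarith
        simp [hA', hB]
      · have hA : ¬((j:ℝ)/K < t) := by
          push_neg
          refine le_trans (le_of_lt ht2) ?_
          rw [div_le_div_iff_of_pos_right hKR]
          have : (i:ℝ) + 1 ≤ (j:ℝ) := by exact_mod_cast hj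
          linarith
        have hB : ¬(((j:ℝ)+1)/K ≤ t) := by
          push_neg
          refine lt_of_lt_of_le ht2 ?_
          rw [div_le_div_iff_of_pos_right hKR]
          have : (i:ℝ) + 1 ≤ (j:ℝ) := by exact_mod_cast hj
          linarith
        simp [hA, hB]
  refine ⟨f, hf0, hf1, ?_, ?_⟩
  · -- variation bound
    have hstep : ∀ i ∈ Finset.range K,
        eVariationOn (fun t => (if (i:ℝ)/K < t then c i else 0)
          - (if ((i:ℝ)+1)/K ≤ t then c i else 0)) (Icc (0:ℝ) 1)
          ≤ ENNReal.ofReal (|c i| + |c i|) := by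
      intro i _
      have : (fun t => (if (i:ℝ)/K < t then c i else 0)
          - (if ((i:ℝ)+1)/K ≤ t then c i else 0))
          = fun t => (if (i:ℝ)/K < t then c i else 0)
            + (-(if ((i:ℝ)+1)/K ≤ t then c i else 0)) := by
        funext t; ring
      rw [this, ENNReal.ofReal_add (abs_nonneg _) (abs_nonneg _)]
      refine le_trans (evar_add_le _ _ _) (add_le_add (evar_stepIoi _ _) ?_)
      rw [show (fun t => -(if ((i:ℝ)+1)/K ≤ t then c i else 0))
          = fun t => -((fun t => if ((i:ℝ)+1)/K ≤ t then c i else 0) t) from rfl, evar_neg]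
      exact evar_stepIci _ _
    have hbig : eVariationOn f (Icc (0:ℝ) 1)
        ≤ ENNReal.ofReal (∑ i ∈ Finset.range K, (|c i| + |c i|)) := by
      rw [hfdef]
      refine le_trans (evar_add_le (fun _ => y) _ _) ?_
      rw [evar_const, zero_add]
      refine le_trans (evar_sum_le _ _ _) ?_
      rw [ENNReal.ofReal_sum_of_nonneg (fun i _ => by positivity)]
      exact Finset.sum_le_sum hstep
    refine lt_of_le_of_lt hbig ?_
    rw [ENNReal.ofReal_lt_ofReal_iff hδ]
    have : ∑ i ∈ Finset.range K, (|c i| + |c i|) = 2 * ∑ i ∈ Finset.range K, |c i| := by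
      rw [Finset.sum_add_distrib]; ring
    rw [this]
    linarith
  · -- countable closure
    set S : Set ℝ := (fun j : ℕ => (j:ℝ)/K) '' (Iic K) with hSdef
    have hSfin : S.Finite := (Set.finite_Iic K).image _
    have hsub : {t : ℝ | ∃ h : t ∈ Set.Icc (0:ℝ) 1, f t = g ⟨t, h⟩} ⊆ S := by
      rintro t ⟨ht, heq⟩
      by_contra htS
      have hne : ∀ j : ℕ, j ≤ K → t ≠ (j:ℝ)/K := by
        intro j hj habs2
        exact htS ⟨j, hj, habs2.symm⟩
      have hgt : ExtQ g t = f t := by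
        rw [ext_apply_of_mem g ht]; exact heq.symm
      have ht1 : t < 1 := by
        rcases lt_or_eq_of_le ht.2 with h | h
        · exact h
        · exact absurd h (by
            have := hne K le_rfl
            rw [div_self (ne_of_gt hKR)] at this
            exact this)
      have htK : t * K < K := by nlinarith [ht.1]
      set i : ℕ := ⌊t * K⌋₊ with hidef
      have hiK : i < K := by
        rw [hidef]
        exact_mod_cast Nat.floor_lt (by nlinarith [ht.1]) |>.2 (by exact_mod_cast htK)
      have hfl : (i:ℝ) ≤ t * K := Nat.floor_le (by nlinarith [ht.1])
      have hfl2 : t * K < (i:ℝ) + 1 := Nat.lt_floor_add_one _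
      have hlow : (i:ℝ)/K < t := by
        rcases lt_or_eq_of_le hfl with h | h
        · rw [div_lt_iff₀ hKR]; linarith
        · exfalso
          exact hne i (le_of_lt hiK) (by rw [eq_div_iff (ne_of_gt hKR)]; linarith)
      have hhigh : t < ((i:ℝ)+1)/K := by
        rw [lt_div_iff₀ hKR]; linarith
      have hcellmem : t ∈ cellI K i := ⟨le_of_lt hlow, le_of_lt hhigh⟩
      have hft : f t = y + c i := hcell i hiK t hlow hhigh
      have hle1 := le_Mx g hcellmem
      have hle2 := mnn_le g hcellmem
      rw [hft] at hgt
      rw [hcdef] at hgt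
      dsimp only at hgt
      split_ifs at hgt with h1 h2
      · linarith
      · linarith
      · push_neg at h1
        rcases le_or_gt (mnn g K i) y with hmy | hmy
        · have := h1 hmy
          linarith
        · linarith
    refine Set.Countable.mono (closure_minimal hsub hSfin.isClosed) hSfin.countable

lemma extq_poly (p : Polynomial ℝ) {t : ℝ} (ht : t ∈ Icc (0:ℝ) 1) :
    ExtQ (p.toContinuousMapOn (Set.Icc 0 1)) t = p.eval t := by
  rw [ext_apply_of_mem _ ht, Polynomial.toContinuousMapOn_apply]
  simp [Polynomial.toContinuousMap_apply]

lemma poly_Sm_small (p : Polynomial ℝ) (hp : 0 < p.natDegree) {ε : ℝ} (hε : 0 < ε) :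
    ∃ K : ℕ, 0 < K ∧ ∀ y : ℝ, Sm (p.toContinuousMapOn (Set.Icc 0 1)) K y < ε := by
  set q : XX := p.toContinuousMapOn (Set.Icc 0 1) with hq
  set D : ℕ := p.natDegree with hD
  set ε₀ : ℝ := ε / (2 * D + 1) with hε₀def
  have hε₀ : 0 < ε₀ := by positivity
  -- uniform continuity on [0,1]
  have huc : UniformContinuousOn (fun t : ℝ => p.eval t) (Icc 0 1) :=
    isCompact_Icc.uniformContinuousOn_of_continuous p.continuous.continuousOn
  rw [Metric.uniformContinuousOn_iff] at huc
  obtain ⟨δ₀, hδ₀, hucd⟩ := huc ε₀ hε₀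
  obtain ⟨K₀, hK₀⟩ := exists_nat_one_div_lt hδ₀
  set K : ℕ := K₀ + 1 with hKdef
  have hK : 0 < K := Nat.succ_pos _
  have hKR : (0:ℝ) < K := by exact_mod_cast hK
  have hKd : 1 / (K:ℝ) < δ₀ := by
    rw [hKdef]; push_cast; exact hK₀
  refine ⟨K, hK, fun y => ?_⟩
  -- oscillation bound per cell
  have hosc : ∀ i : ℕ, i < K → Mx q K i - mnn q K i ≤ ε₀ := by
    intro i hi
    have hsub := cellI_subset hK hi
    have key : ∀ t ∈ cellI K i, ∀ s ∈ cellI K i, ExtQ q t ≤ ExtQ q s + ε₀ := by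
      intro t ht s hs
      have htI := hsub ht
      have hsI := hsub hs
      have hdist : dist t s < δ₀ := by
        rw [Real.dist_eq]
        refine lt_of_le_of_lt ?_ hKd
        rw [abs_le]
        obtain ⟨ht1, ht2⟩ := ht
        obtain ⟨hs1, hs2⟩ := hs
        have hdiff : ((i:ℝ)+1)/K - (i:ℝ)/K = 1/K := by field_simp; ring
        constructor <;> linarith
      have := hucd t htI s hsI hdist
      rw [Real.dist_eq] at this
      have h1 := abs_le.1 (le_of_lt this)
      rw [extq_poly p htI, extq_poly p hsI]
      linarith [h1.2]
    have : ∀ t ∈ cellI K i, ExtQ q t ≤ mnn q K i + ε₀ := by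
      intro t ht
      have : ExtQ q t - ε₀ ≤ mnn q K i :=
        le_mnn q fun s hs => by linarith [key t ht s hs]
      linarith
    have := Mx_le q this
    linarith
  -- straddling cells contain roots
  set Str : Finset ℕ := (Finset.range K).filter
      (fun i => 0 < max 0 (min (Mx q K i - y) (y - mnn q K i))) with hStr
  have hroot : ∀ i ∈ Str, ∃ r ∈ cellI K i, p.eval r = y := by
    intro i hi
    rw [hStr, Finset.mem_filter, Finset.mem_range] at hi
    obtain ⟨hiK, hpos⟩ := hi
    have hmin : 0 < min (Mx q K i - y) (y - mnn q K i) := by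
      by_contra h
      push_neg at h
      rw [max_eq_left h] at hpos
      exact lt_irrefl _ hpos
    have h1 : y < Mx q K i := by have := lt_of_lt_of_le hmin (min_le_left _ _); linarith
    have h2 : mnn q K i < y := by have := lt_of_lt_of_le hmin (min_le_right _ _); linarith
    obtain ⟨t₂, ht₂, hyt₂⟩ := exists_lt_Mx q h1
    obtain ⟨t₁, ht₁, hyt₁⟩ := exists_mnn_lt q h2
    have hsub := cellI_subset hK hiK
    rw [extq_poly p (hsub ht₂)] at hyt₂
    rw [extq_poly p (hsub ht₁)] at hyt₁
    have hcont : ContinuousOn (fun t : ℝ => p.eval t) (uIcc t₁ t₂) :=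
      p.continuous.continuousOn
    have hmem : y ∈ uIcc (p.eval t₁) (p.eval t₂) :=
      Set.mem_uIcc.2 (Or.inl ⟨le_of_lt hyt₁, le_of_lt hyt₂⟩)
    obtain ⟨r, hr, hry⟩ := intermediate_value_uIcc hcont hmem
    refine ⟨r, ?_, hry⟩
    have : uIcc t₁ t₂ ⊆ cellI K i := by
      rw [uIcc_eq_union]
      refine Set.union_subset ?_ ?_ <;> intro x hx
      · exact ⟨le_trans ht₁.1 hx.1, le_trans hx.2 ht₂.2⟩
      · exact ⟨le_trans ht₂.1 hx.1, le_trans hx.2 ht₁.2⟩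
    exact this hr
  classical
  set ψ : ℕ → ℝ := fun i => if h : ∃ r ∈ cellI K i, p.eval r = y then h.choose else 0 with hψ
  have hψspec : ∀ i ∈ Str, ψ i ∈ cellI K i ∧ p.eval (ψ i) = y := by
    intro i hi
    have h := hroot i hi
    rw [hψ]
    simp only [dif_pos h]
    exact ⟨h.choose_spec.1, h.choose_spec.2⟩
  -- card bound
  have hsubne : (p - Polynomial.C y) ≠ 0 := by
    intro hzero
    have hpc : p = Polynomial.C y := by rwa [sub_eq_zero] at hzero
    have hnd : p.natDegree = 0 := by rw [hpc]; exact Polynomial.natDegree_C y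
    rw [hD, hnd] at hp
    exact lt_irrefl 0 hp
  have hcard : Str.card ≤ 2 * D := by
    have hfib : ∀ a ∈ Str.image ψ, (Str.filter (fun x => ψ x = a)).card ≤ 2 := by
      intro a _
      set F := Str.filter (fun x => ψ x = a) with hF
      rcases Finset.eq_empty_or_nonempty F with h | h
      · simp [h]
      · set i₀ := F.min' h with hi₀
        have hi₀F : i₀ ∈ F := F.min'_mem h
        have hsub2 : F ⊆ {i₀, i₀ + 1} := by
          intro j hj
          have hjF := hj
          rw [hF, Finset.mem_filter] at hj hi₀F
          have h1 : a ∈ cellI K i₀ := hi₀F.2 ▸ (hψspec i₀ hi₀F.1).1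
          have h2 : a ∈ cellI K j := hj.2 ▸ (hψspec j hj.1).1
          have hle : i₀ ≤ j := Finset.min'_le F j hjF
          have hr1 : (j:ℝ)/K ≤ ((i₀:ℝ)+1)/K := le_trans h2.1 h1.2
          rw [div_le_div_iff_of_pos_right hKR] at hr1
          have hj2 : j ≤ i₀ + 1 := by exact_mod_cast hr1
          simp only [Finset.mem_insert, Finset.mem_singleton]
          omega
        calc F.card ≤ ({i₀, i₀+1} : Finset ℕ).card := Finset.card_le_card hsub2
          _ ≤ 2 := (Finset.card_insert_le _ _).trans (by simp)
    have h1 : Str.card ≤ 2 * (Str.image ψ).card :=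
      Finset.card_le_mul_card_image Str 2 hfib
    have h2 : (Str.image ψ) ⊆ (p - Polynomial.C y).roots.toFinset := by
      intro a ha
      obtain ⟨i, hi, rfl⟩ := Finset.mem_image.1 ha
      rw [Multiset.mem_toFinset, Polynomial.mem_roots hsubne]
      rw [Polynomial.IsRoot, Polynomial.eval_sub, Polynomial.eval_C,
        (hψspec i hi).2, sub_self]
    have h3 : (p - Polynomial.C y).roots.toFinset.card ≤ D := by
      refine le_trans (Multiset.toFinset_card_le _) ?_
      refine le_trans (Polynomial.card_roots' _) ?_
      rw [Polynomial.natDegree_sub_C]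
    calc Str.card ≤ 2 * (Str.image ψ).card := h1
      _ ≤ 2 * (p - Polynomial.C y).roots.toFinset.card :=
          Nat.mul_le_mul (le_refl 2) (Finset.card_le_card h2)
      _ ≤ 2 * D := Nat.mul_le_mul (le_refl 2) h3
  -- sum estimate
  have hsum : Sm q K y = ∑ i ∈ Str, max 0 (min (Mx q K i - y) (y - mnn q K i)) := by
    rw [Sm, hStr]
    rw [Finset.sum_filter_of_ne]
    intro i _ hne
    by_contra h
    push_neg at h
    exact hne (le_antisymm h (le_max_left _ _))
  rw [hsum]
  have hterm : ∀ i ∈ Str, max 0 (min (Mx q K i - y) (y - mnn q K i)) ≤ ε₀ := by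
    intro i hi
    rw [hStr, Finset.mem_filter, Finset.mem_range] at hi
    obtain ⟨hiK, hpos⟩ := hi
    have hmin : 0 < min (Mx q K i - y) (y - mnn q K i) := by
      by_contra h
      push_neg at h
      rw [max_eq_left h] at hpos
      exact lt_irrefl _ hpos
    have h2 : mnn q K i < y := by have := lt_of_lt_of_le hmin (min_le_right _ _); linarith
    refine max_le (le_of_lt hε₀) ?_
    refine le_trans (min_le_left _ _) ?_
    have := hosc i hiK
    linarith
  calc ∑ i ∈ Str, max 0 (min (Mx q K i - y) (y - mnn q K i))
      ≤ ∑ _i ∈ Str, ε₀ := Finset.sum_le_sum hterm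
    _ = Str.card * ε₀ := by rw [Finset.sum_const, nsmul_eq_mul]
    _ ≤ (2*D : ℕ) * ε₀ :=
        mul_le_mul_of_nonneg_right (by exact_mod_cast hcard) (le_of_lt hε₀)
    _ < ε := by
        rw [hε₀def]
        push_cast
        rw [mul_div_assoc']
        rw [div_lt_iff₀ (by positivity)]
        nlinarith

lemma dense_interior_PP (n : ℕ) :
    Dense (interior {g : XX | PP g (1/((n:ℝ)+1))}) := by
  rw [Metric.dense_iff]
  intro g₀ r hr
  -- polynomials are dense
  have htop : (polynomialFunctions (Set.Icc (0:ℝ) 1)).topologicalClosure = ⊤ :=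
    polynomialFunctions_closure_eq_top 0 1
  have h1 : g₀ ∈ (polynomialFunctions (Set.Icc (0:ℝ) 1)).topologicalClosure := by
    rw [htop]; exact Algebra.mem_top
  have h2 : g₀ ∈ closure ((polynomialFunctions (Set.Icc (0:ℝ) 1) : Set XX)) := by
    rw [← Subalgebra.topologicalClosure_coe]; exact h1
  obtain ⟨qc, hqc, hdist⟩ := Metric.mem_closure_iff.1 h2 (r/2) (by positivity)
  rw [polynomialFunctions_coe] at hqc
  obtain ⟨p, rfl⟩ := hqc
  -- make it nonconstant
  set p' : Polynomial ℝ := if 0 < p.natDegree then p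
    else p + Polynomial.C (r/4) * Polynomial.X with hp'def
  have hp' : 0 < p'.natDegree := by
    rw [hp'def]
    split_ifs with h
    · exact h
    · push_neg at h
      obtain ⟨a, ha⟩ := Polynomial.natDegree_eq_zero.1 (Nat.le_zero.1 h)
      rw [← ha, add_comm, Polynomial.natDegree_add_C,
        Polynomial.natDegree_C_mul_X _ (by positivity : (r/4) ≠ 0)]
      norm_num
  have hd2 : dist (p'.toContinuousMapOn (Set.Icc 0 1))
      (p.toContinuousMapOn (Set.Icc 0 1)) ≤ r/4 := by
    rw [hp'def]
    split_ifs with h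
    · simp [dist_self]; positivity
    · rw [ContinuousMap.dist_le (by positivity)]
      intro x
      rw [Polynomial.toContinuousMapOn_apply, Polynomial.toContinuousMapOn_apply]
      simp only [Polynomial.toContinuousMap_apply, Polynomial.eval_add, Polynomial.eval_mul,
        Polynomial.eval_C, Polynomial.eval_X]
      rw [Real.dist_eq]
      have hx1 : (0:ℝ) ≤ (x:ℝ) := x.2.1
      have hx2 : (x:ℝ) ≤ 1 := x.2.2
      rw [add_sub_cancel_left, abs_of_nonneg (by positivity)]
      nlinarith
  obtain ⟨K, hK, hSm⟩ := poly_Sm_small p' hp'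
    (show (0:ℝ) < 1/(2*((n:ℝ)+1)) by positivity)
  have hKR : (0:ℝ) < K := by exact_mod_cast hK
  set ρ : ℝ := min (r/8) (1/(8*((K:ℝ)+1)*((n:ℝ)+1))) with hρdef
  have hρ : 0 < ρ := lt_min (by positivity) (by positivity)
  have hball : Metric.ball (p'.toContinuousMapOn (Set.Icc 0 1)) ρ
      ⊆ {g : XX | PP g (1/((n:ℝ)+1))} := by
    intro g hg
    rw [Metric.mem_ball] at hg
    refine ⟨K, hK, fun y => ?_⟩
    have hcmp := Sm_le_Sm_add g (p'.toContinuousMapOn (Set.Icc 0 1)) K y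
    have hSmy := hSm y
    have hρ2 : ρ ≤ 1/(8*((K:ℝ)+1)*((n:ℝ)+1)) := min_le_right _ _
    have hKρ : (K:ℝ) * (2 * ρ) ≤ 1/(4*((n:ℝ)+1)) := by
      have h1 : (K:ℝ) * (2 * ρ) ≤ (K:ℝ) * (2 * (1/(8*((K:ℝ)+1)*((n:ℝ)+1)))) := by
        have := hρ2
        nlinarith [hKR]
      refine le_trans h1 ?_
      rw [show (K:ℝ) * (2 * (1/(8*((K:ℝ)+1)*((n:ℝ)+1))))
          = (2*(K:ℝ))/(8*((K:ℝ)+1)*((n:ℝ)+1)) by ring]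
      rw [div_le_div_iff₀ (by positivity) (by positivity)]
      ring_nf
      nlinarith [hKR, Nat.cast_nonneg (α := ℝ) n]
    have hdg : dist g (p'.toContinuousMapOn (Set.Icc 0 1)) < ρ := hg
    have : Sm g K y ≤ Sm (p'.toContinuousMapOn (Set.Icc 0 1)) K y + (K:ℝ) * (2 * ρ) := by
      refine le_trans hcmp ?_
      have hdn : (0:ℝ) ≤ dist g (p'.toContinuousMapOn (Set.Icc 0 1)) := dist_nonneg
      have : (K:ℝ) * (2 * dist g (p'.toContinuousMapOn (Set.Icc 0 1)))
          ≤ (K:ℝ) * (2 * ρ) := by nlinarith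
      linarith
    have hfin : Sm g K y < 1/(2*((n:ℝ)+1)) + 1/(4*((n:ℝ)+1)) := by linarith
    refine lt_of_lt_of_le hfin ?_
    rw [div_add_div _ _ (by positivity) (by positivity), div_le_div_iff₀ (by positivity)
      (by positivity)]
    ring_nf
    nlinarith [Nat.cast_nonneg (α := ℝ) n]
  have hmem : p'.toContinuousMapOn (Set.Icc 0 1)
      ∈ interior {g : XX | PP g (1/((n:ℝ)+1))} :=
    interior_maximal hball Metric.isOpen_ball (Metric.mem_ball_self hρ)
  refine ⟨p'.toContinuousMapOn (Set.Icc 0 1), ?_, hmem⟩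
  rw [Metric.mem_ball]
  calc dist (p'.toContinuousMapOn (Set.Icc 0 1)) g₀
      ≤ dist (p'.toContinuousMapOn (Set.Icc 0 1)) (p.toContinuousMapOn (Set.Icc 0 1))
        + dist (p.toContinuousMapOn (Set.Icc 0 1)) g₀ := dist_triangle _ _ _
    _ < r/4 + r/2 := by
        have : dist (p.toContinuousMapOn (Set.Icc 0 1)) g₀ < r/2 := by
          rw [dist_comm]
          simpa [Polynomial.toContinuousMapOnAlgHom_apply] using hdist
        have h4 := hd2
        linarith
    _ < r := by linarith

end PermeableAux


/-- A continuous map `g : [0,1] → ℝ` has a permeable graph if for every `y` and `δ > 0`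
there is `f : [0,1] → ℝ` with `f 0 = f 1 = y`, total variation `< δ`, and such that the
closure of `{t : f t = g t}` is at most countable. -/
def PermeableGraphCM (g : C(Set.Icc (0:ℝ) 1, ℝ)) : Prop :=
  ∀ y : ℝ, ∀ δ : ℝ, 0 < δ →
    ∃ f : ℝ → ℝ, f 0 = y ∧ f 1 = y ∧
      eVariationOn f (Set.Icc 0 1) < ENNReal.ofReal δ ∧
      (closure {t : ℝ | ∃ h : t ∈ Set.Icc (0:ℝ) 1, f t = g ⟨t, h⟩}).Countable

/-- The set of continuous functions on `[0,1]` with permeable graph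
contains a dense `Gδ` subset of `C[0,1]`. -/
theorem typical_continuous_function_permeable_graph :
    ∃ 𝒢 : Set C(Set.Icc (0:ℝ) 1, ℝ), Dense 𝒢 ∧ IsGδ 𝒢 ∧
      ∀ g ∈ 𝒢, PermeableGraphCM g := by
  refine ⟨⋂ n : ℕ, interior {g : XX | PP g (1/((n:ℝ)+1))}, ?_, ?_, ?_⟩
  · exact dense_iInter_of_isOpen (fun n => isOpen_interior) (fun n => dense_interior_PP n)
  · exact IsGδ.iInter_of_isOpen fun n => isOpen_interior
  · intro g hg y δ hδ
    obtain ⟨n, hn⟩ := exists_nat_one_div_lt (show (0:ℝ) < δ/8 by positivity)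
    have hgn := Set.mem_iInter.1 hg n
    have hP : g ∈ {g : XX | PP g (1/((n:ℝ)+1))} := interior_subset hgn
    obtain ⟨K, hK, hS⟩ := hP
    exact construct g y δ hδ K hK (lt_trans (hS y) hn)
end

section
/- Let j ∈ ℕ, j ≥ 2, and β ∈ (0,1). Suppose g : [0,1] → ℝ is continuous and there exists a constant C such that |g((n+1)j^{-k}) − g(n j^{-k})| ≤ β^k for all k ∈ ℕ and 0 ≤ n < j^k. Then g is Hölder continuous with exponent α = −log(β)/log(j). -/
open Set



private lemma chain_lemma (j : ℕ) (β : ℝ) (hβ0 : 0 < β) (g : ℝ → ℝ)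
    (hinc : ∀ k n : ℕ, n < j ^ k →
      |g ((n + 1 : ℝ) / (j : ℝ) ^ k) - g ((n : ℝ) / (j : ℝ) ^ k)| ≤ β ^ k) :
    ∀ k a b : ℕ, a ≤ b → b ≤ j ^ k →
      |g ((b : ℝ) / (j : ℝ) ^ k) - g ((a : ℝ) / (j : ℝ) ^ k)| ≤ (b - a : ℕ) * β ^ k := by
  intro k a b hab
  induction b, hab using Nat.le_induction with
  | base => intro _; simp
  | succ b hab ih =>
    intro hbk
    have hb : b < j ^ k := lt_of_lt_of_le (Nat.lt_succ_self b) hbk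
    have h1 := hinc k b hb
    have h2 := ih (le_of_lt hb)
    have hsub : (b + 1 - a : ℕ) = (b - a) + 1 := by omega
    calc |g ((↑(b+1) : ℝ) / (j:ℝ) ^ k) - g ((a:ℝ) / (j:ℝ) ^ k)|
        ≤ |g ((↑(b+1) : ℝ) / (j:ℝ) ^ k) - g ((b:ℝ) / (j:ℝ) ^ k)|
          + |g ((b:ℝ) / (j:ℝ) ^ k) - g ((a:ℝ) / (j:ℝ) ^ k)| := abs_sub_le _ _ _
      _ ≤ β ^ k + (b - a : ℕ) * β ^ k := by
          refine add_le_add ?_ h2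
          convert h1 using 3
          · rfl
          · norm_num
      _ = ((b + 1 - a : ℕ) : ℝ) * β ^ k := by rw [hsub]; push_cast; ring

private lemma approx_lemma (j : ℕ) (hj : 2 ≤ j) (β : ℝ) (hβ : β ∈ Set.Ioo (0:ℝ) 1)
    (g : ℝ → ℝ) (hg : ContinuousOn g (Set.Icc 0 1))
    (chain : ∀ k a b : ℕ, a ≤ b → b ≤ j ^ k →
      |g ((b : ℝ) / (j : ℝ) ^ k) - g ((a : ℝ) / (j : ℝ) ^ k)| ≤ (b - a : ℕ) * β ^ k)
    (x : ℝ) (hx : x ∈ Set.Icc (0:ℝ) 1) (k : ℕ) :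
    |g x - g ((⌊x * (j:ℝ) ^ k⌋₊ : ℝ) / (j:ℝ) ^ k)| ≤ ((j:ℝ) - 1) / (1 - β) * β ^ (k+1) := by
  obtain ⟨hβ0, hβ1⟩ := hβ
  obtain ⟨hx0, hx1⟩ := hx
  have hj0 : (0:ℝ) < j := by positivity
  have hj1 : (1:ℝ) < j := by exact_mod_cast hj.trans_lt' one_lt_two
  set D : ℝ := ((j:ℝ) - 1) / (1 - β) with hD
  have hD0 : 0 ≤ D := by
    apply div_nonneg <;> linarith
  set n : ℕ → ℕ := fun m => ⌊x * (j:ℝ) ^ m⌋₊ with hn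
  set p : ℕ → ℝ := fun m => (n m : ℝ) / (j:ℝ) ^ m with hp
  have hjm : ∀ m : ℕ, (0:ℝ) < (j:ℝ) ^ m := fun m => by positivity
  have hfl : ∀ m, (n m : ℝ) ≤ x * (j:ℝ) ^ m := fun m =>
    Nat.floor_le (by positivity)
  have hfu : ∀ m, x * (j:ℝ) ^ m < (n m : ℝ) + 1 := fun m => Nat.lt_floor_add_one _
  have hnk : ∀ m, n m ≤ j ^ m := by
    intro m
    have : x * (j:ℝ) ^ m ≤ ((j ^ m : ℕ) : ℝ) := by
      push_cast
      nlinarith [hjm m]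
    calc n m ≤ ⌊((j ^ m : ℕ) : ℝ)⌋₊ := Nat.floor_le_floor this
      _ = j ^ m := Nat.floor_natCast _
  have step : ∀ m, |g (p (m+1)) - g (p m)| ≤ ((j:ℝ) - 1) * β ^ (m+1) := by
    intro m
    have hlow : j * n m ≤ n (m+1) := by
      apply Nat.le_floor
      push_cast
      nlinarith [mul_le_mul_of_nonneg_left (hfl m) (le_of_lt hj0), pow_succ (j:ℝ) m]
    have hup : n (m+1) < j * (n m + 1) := by
      have h : x * (j:ℝ)^(m+1) < ((j * (n m + 1) : ℕ) : ℝ) := by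
        push_cast
        nlinarith [mul_lt_mul_of_pos_left (hfu m) hj0, pow_succ (j:ℝ) m]
      exact (Nat.floor_lt (by positivity)).2 h
    have hmul : j * (n m + 1) = j * n m + j := by ring
    have hup' : n (m+1) - j * n m ≤ j - 1 := by omega
    have hpm : p m = ((j * n m : ℕ) : ℝ) / (j:ℝ) ^ (m+1) := by
      rw [hp]
      push_cast
      field_simp
      ring
    have hch := chain (m+1) (j * n m) (n (m+1)) hlow (hnk (m+1))
    rw [← hpm] at hch
    calc |g (p (m+1)) - g (p m)| ≤ ((n (m+1) - j * n m : ℕ) : ℝ) * β ^ (m+1) := hch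
      _ ≤ ((j:ℝ) - 1) * β ^ (m+1) := by
          apply mul_le_mul_of_nonneg_right _ (by positivity)
          have h1 : ((n (m+1) - j * n m : ℕ) : ℝ) ≤ ((j - 1 : ℕ) : ℝ) := by exact_mod_cast hup'
          have h2 : ((j - 1 : ℕ) : ℝ) = (j:ℝ) - 1 := by
            have : (1:ℕ) ≤ j := by omega
            push_cast [this]; ring
          linarith
  have tail : ∀ m, k ≤ m → |g (p m) - g (p k)| ≤ D * β ^ (k+1) - D * β ^ (m+1) := by
    intro m hm
    induction m, hm using Nat.le_induction with
    | base => simp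
    | succ m hm ih =>
      have hDβ : D * β ^ (m+1) - D * β ^ (m+2) = ((j:ℝ) - 1) * β ^ (m+1) := by
        have h1 : (1:ℝ) - β ≠ 0 := by linarith
        rw [hD]
        field_simp
        ring
      calc |g (p (m+1)) - g (p k)|
          ≤ |g (p (m+1)) - g (p m)| + |g (p m) - g (p k)| := abs_sub_le _ _ _
        _ ≤ ((j:ℝ) - 1) * β ^ (m+1) + (D * β ^ (k+1) - D * β ^ (m+1)) :=
            add_le_add (step m) ih
        _ = D * β ^ (k+1) - D * β ^ (m+2) := by rw [← hDβ]; ring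
  have hmem : ∀ m, p m ∈ Set.Icc (0:ℝ) 1 := by
    intro m
    constructor
    · rw [hp]
      positivity
    · rw [hp]
      rw [div_le_one (hjm m)]
      calc (n m : ℝ) ≤ x * (j:ℝ)^m := hfl m
        _ ≤ 1 * (j:ℝ)^m := by nlinarith [hjm m]
        _ = (j:ℝ)^m := by ring
  have hdist : ∀ m, |p m - x| ≤ (1/(j:ℝ)) ^ m := by
    intro m
    have h1 := hfl m
    have h2 := hfu m
    have h3 := hjm m
    have hpow : (1/(j:ℝ))^m = 1/(j:ℝ)^m := by rw [div_pow, one_pow]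
    have hle : p m ≤ x := by
      rw [hp, div_le_iff₀ h3]
      linarith
    have hge : x ≤ p m + (1/(j:ℝ))^m := by
      rw [hp, hpow, ← add_div, le_div_iff₀ h3]
      linarith
    have hpos : (0:ℝ) < (1/(j:ℝ))^m := by positivity
    rw [abs_le]
    constructor <;> linarith
  have h0 : Filter.Tendsto (fun m : ℕ => (1/(j:ℝ))^m) Filter.atTop (nhds 0) :=
    tendsto_pow_atTop_nhds_zero_of_lt_one (by positivity)
      (by rw [div_lt_one hj0]; linarith)
  have htend : Filter.Tendsto p Filter.atTop (nhds x) := by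
    rw [tendsto_iff_dist_tendsto_zero]
    exact squeeze_zero (fun m => dist_nonneg)
      (fun m => by rw [Real.dist_eq]; exact hdist m) h0
  have htend2 : Filter.Tendsto (fun m => g (p m)) Filter.atTop (nhds (g x)) := by
    apply ((hg x ⟨hx0, hx1⟩).tendsto).comp
    exact tendsto_nhdsWithin_of_tendsto_nhds_of_eventually_within _ htend
      (Filter.Eventually.of_forall hmem)
  have htend3 : Filter.Tendsto (fun m => |g (p m) - g (p k)|) Filter.atTop
      (nhds (|g x - g (p k)|)) := ((htend2.sub_const _).abs)
  have : |g x - g (p k)| ≤ D * β ^ (k+1) := by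
    apply le_of_tendsto htend3
    filter_upwards [Filter.eventually_ge_atTop k] with m hm
    have h4 := tail m hm
    have h5 : 0 ≤ D * β ^ (m+1) := by positivity
    linarith
  exact this

/-- If a continuous `g : [0,1] → ℝ` satisfies
`|g((n+1)/j^k) − g(n/j^k)| ≤ β^k` over all consecutive `j`-adic points, then `g` is
Hölder continuous on `[0,1]` with exponent `α = −log β / log j`. -/
theorem holder_from_dyadic_increments
    (j : ℕ) (hj : 2 ≤ j) (β : ℝ) (hβ : β ∈ Set.Ioo (0:ℝ) 1)
    (g : ℝ → ℝ) (hg : ContinuousOn g (Set.Icc 0 1))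
    (hinc : ∀ k n : ℕ, n < j ^ k →
      |g ((n + 1 : ℝ) / (j : ℝ) ^ k) - g ((n : ℝ) / (j : ℝ) ^ k)| ≤ β ^ k) :
    ∃ C : ℝ, 0 < C ∧ ∀ x ∈ Set.Icc (0:ℝ) 1, ∀ y ∈ Set.Icc (0:ℝ) 1,
      |g x - g y| ≤ C * |x - y| ^ (-(Real.log β / Real.log j)) := by
  have chain := chain_lemma j β hβ.1 g hinc
  have approx : ∀ x ∈ Set.Icc (0:ℝ) 1, ∀ k : ℕ,
      |g x - g ((⌊x * (j:ℝ) ^ k⌋₊ : ℝ) / (j:ℝ) ^ k)| ≤ ((j:ℝ) - 1) / (1 - β) * β ^ (k+1) :=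
    fun x hx k => approx_lemma j hj β hβ g hg chain x hx k

  obtain ⟨hβ0, hβ1⟩ := hβ
  have hj0 : (0:ℝ) < j := by positivity
  have hj1 : (1:ℝ) < j := by exact_mod_cast hj.trans_lt' one_lt_two
  set α : ℝ := -(Real.log β / Real.log j) with hαdef
  have hlogj : 0 < Real.log j := Real.log_pos hj1
  have hlogβ : Real.log β < 0 := Real.log_neg hβ0 hβ1
  have hα : 0 < α := by
    rw [hαdef]
    exact neg_pos.2 (div_neg_of_neg_of_pos hlogβ hlogj)
  set D : ℝ := ((j:ℝ) - 1) / (1 - β) with hD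
  have hD0 : 0 ≤ D := div_nonneg (by linarith) (by linarith)
  set K : ℝ := 2 * D * β + 1 with hK
  have hK0 : 0 < K := by nlinarith
  -- key estimate: |x-y| ≤ j^{-k} implies |g x - g y| ≤ K β^k
  have main : ∀ (k : ℕ), ∀ x ∈ Set.Icc (0:ℝ) 1, ∀ y ∈ Set.Icc (0:ℝ) 1,
      x ≤ y → y - x ≤ ((j:ℝ)^k)⁻¹ → |g x - g y| ≤ K * β ^ k := by
    intro k x hx y hy hxy hle
    have hjk : (0:ℝ) < (j:ℝ)^k := by positivity
    set nx : ℕ := ⌊x * (j:ℝ)^k⌋₊ with hnx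
    set ny : ℕ := ⌊y * (j:ℝ)^k⌋₊ with hny
    have h1 : nx ≤ ny := Nat.floor_le_floor (by nlinarith)
    have h2 : ny ≤ nx + 1 := by
      have hy' : y * (j:ℝ)^k ≤ x * (j:ℝ)^k + 1 := by
        have : (y - x) * (j:ℝ)^k ≤ 1 := by
          calc (y - x) * (j:ℝ)^k ≤ ((j:ℝ)^k)⁻¹ * (j:ℝ)^k :=
              mul_le_mul_of_nonneg_right hle (le_of_lt hjk)
            _ = 1 := inv_mul_cancel₀ (ne_of_gt hjk)
        nlinarith
      calc ny ≤ ⌊x * (j:ℝ)^k + 1⌋₊ := Nat.floor_le_floor hy'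
        _ = nx + 1 := by
            rw [hnx]
            exact_mod_cast Nat.floor_add_one (by nlinarith [hx.1])
    have hnyk : ny ≤ j ^ k := by
      have hyk : y * (j:ℝ) ^ k ≤ ((j ^ k : ℕ) : ℝ) := by
        push_cast
        nlinarith [hy.2]
      calc ny ≤ ⌊((j ^ k : ℕ) : ℝ)⌋₊ := Nat.floor_le_floor hyk
        _ = j ^ k := Nat.floor_natCast _
    have hch := chain k nx ny h1 hnyk
    have hd1 : ((ny - nx : ℕ) : ℝ) ≤ 1 := by
      have : ny - nx ≤ 1 := by omega
      exact_mod_cast this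
    have hmid : |g ((nx:ℝ)/(j:ℝ)^k) - g ((ny:ℝ)/(j:ℝ)^k)| ≤ β ^ k := by
      rw [abs_sub_comm]
      calc |g ((ny:ℝ)/(j:ℝ)^k) - g ((nx:ℝ)/(j:ℝ)^k)| ≤ ((ny - nx : ℕ):ℝ) * β ^ k := hch
        _ ≤ 1 * β ^ k := mul_le_mul_of_nonneg_right hd1 (by positivity)
        _ = β ^ k := one_mul _
    have hax := approx x hx k
    have hay := approx y hy k
    calc |g x - g y|
        ≤ |g x - g ((nx:ℝ)/(j:ℝ)^k)| + |g ((nx:ℝ)/(j:ℝ)^k) - g ((ny:ℝ)/(j:ℝ)^k)|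
          + |g ((ny:ℝ)/(j:ℝ)^k) - g y| := by
          have t1 := abs_sub_le (g x) (g ((nx:ℝ)/(j:ℝ)^k)) (g y)
          have t2 := abs_sub_le (g ((nx:ℝ)/(j:ℝ)^k)) (g ((ny:ℝ)/(j:ℝ)^k)) (g y)
          linarith
      _ ≤ D * β ^ (k+1) + β ^ k + D * β ^ (k+1) := by
          refine add_le_add (add_le_add hax hmid) ?_
          rw [abs_sub_comm]
          exact hay
      _ = K * β ^ k := by rw [hK]; ring
  -- exponent identity
  have hpowid : ∀ k : ℕ, β ^ k = (((j:ℝ)^k)⁻¹) ^ α := by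
    intro k
    have h1 : (((j:ℝ)^k)⁻¹ : ℝ) ^ α = Real.exp (Real.log (((j:ℝ)^k)⁻¹) * α) :=
      Real.rpow_def_of_pos (by positivity) α
    rw [Real.log_inv, Real.log_pow] at h1
    have h2 : (-(↑k * Real.log ↑j)) * α = ↑k * Real.log β := by
      rw [hαdef]
      field_simp
    rw [h1, h2]
    rw [← Real.exp_log hβ0, ← Real.exp_nat_mul, Real.exp_log hβ0]
  refine ⟨K * (j:ℝ) ^ α, by positivity, ?_⟩
  intro x hx y hy
  rcases eq_or_ne x y with rfl | hne
  · simp [Real.zero_rpow (ne_of_gt hα)]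
  · set d : ℝ := |x - y| with hd
    have hd0 : 0 < d := abs_pos.2 (sub_ne_zero.2 hne)
    have hd1 : d ≤ 1 := by
      rw [hd, abs_sub_le_iff]
      constructor <;> linarith [hx.1, hx.2, hy.1, hy.2]
    set k : ℕ := ⌊Real.logb j (1/d)⌋₊ with hkdef
    have hjk : (0:ℝ) < (j:ℝ)^k := by positivity
    have hlb0 : 0 ≤ Real.logb j (1/d) :=
      Real.logb_nonneg hj1 (by rw [le_div_iff₀ hd0]; linarith)
    have hk1 : (j:ℝ)^k ≤ 1/d := by
      calc (j:ℝ)^k = (j:ℝ)^(k:ℝ) := (Real.rpow_natCast _ _).symm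
        _ ≤ (j:ℝ)^(Real.logb j (1/d)) :=
            Real.rpow_le_rpow_of_exponent_le hj1.le (Nat.floor_le hlb0)
        _ = 1/d := Real.rpow_logb hj0 (ne_of_gt hj1) (by positivity)
    have hdk : d ≤ ((j:ℝ)^k)⁻¹ := by
      rw [inv_eq_one_div, le_div_iff₀ hjk]
      have := (le_div_iff₀ hd0).1 hk1
      linarith [mul_comm d ((j:ℝ)^k)]
    have hk2 : ((j:ℝ)^k)⁻¹ ≤ (j:ℝ) * d := by
      have hlt : 1/d < (j:ℝ)^(k+1) := by
        calc 1/d = (j:ℝ)^(Real.logb j (1/d)) :=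
            (Real.rpow_logb hj0 (ne_of_gt hj1) (by positivity)).symm
          _ < (j:ℝ)^((k:ℝ)+1) := by
              apply Real.rpow_lt_rpow_of_exponent_lt hj1
              have hfl := Nat.lt_floor_add_one (Real.logb j (1/d))
              push_cast
              exact_mod_cast hfl
          _ = (j:ℝ)^(k+1) := by
              rw [← Real.rpow_natCast (j:ℝ) (k+1)]
              push_cast
              ring_nf
      have hjk1 : (0:ℝ) < (j:ℝ)^(k+1) := by positivity
      have : 1 < (j:ℝ)^(k+1) * d := by
        rw [div_lt_iff₀ hd0] at hlt
        linarith [mul_comm ((j:ℝ)^(k+1)) d]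
      rw [inv_eq_one_div, div_le_iff₀ hjk]
      have hexp : (j:ℝ)^(k+1) = (j:ℝ) * (j:ℝ)^k := by ring
      nlinarith
    -- combine
    have hgb : |g x - g y| ≤ K * β ^ k := by
      rcases le_total x y with hxy | hxy
      · apply main k x hx y hy hxy
        have : d = y - x := by rw [hd, abs_sub_comm, abs_of_nonneg (by linarith)]
        linarith [hdk, this ▸ hdk]
      · rw [abs_sub_comm]
        apply main k y hy x hx hxy
        have : d = x - y := by rw [hd, abs_of_nonneg (by linarith)]
        linarith [this ▸ hdk]
    have hβk : β ^ k ≤ (j:ℝ)^α * d ^ α := by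
      rw [hpowid k]
      calc (((j:ℝ)^k)⁻¹) ^ α ≤ ((j:ℝ) * d) ^ α :=
          Real.rpow_le_rpow (by positivity) hk2 hα.le
        _ = (j:ℝ)^α * d ^ α := Real.mul_rpow hj0.le hd0.le
    calc |g x - g y| ≤ K * β ^ k := hgb
      _ ≤ K * ((j:ℝ)^α * d ^ α) := mul_le_mul_of_nonneg_left hβk hK0.le
      _ = K * (j:ℝ)^α * d ^ α := by ring
end

section
/- Let f : [a,b] → ℝ be a regulated function. Then the total variation of f equals the supremum over partitions a = x_0 < … < x_n = b of ∑_{k=1}^n ( |f(x_{k−1}+) − f(x_{k−1})| + |f(x_k−) − f(x_{k−1}+)| + |f(x_k) − f(x_k−)| ). -/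
open Set Filter
open scoped ENNReal Topology

private lemma regulated_variation_sum3 (g : ℕ → ℝ≥0∞) (n : ℕ) :
    ∑ j ∈ Finset.range (3*n), g j
      = ∑ k ∈ Finset.range n, (g (3*k) + g (3*k+1) + g (3*k+2)) := by
  induction n with
  | zero => simp
  | succ n ih =>
    rw [show 3*(n+1) = (3*n+1+1)+1 by ring, Finset.sum_range_succ, Finset.sum_range_succ,
      Finset.sum_range_succ, ih, Finset.sum_range_succ]
    have h2 : 3*n+1+1 = 3*n+2 := by omega
    rw [h2]; ring

/-- For a regulated function `f : [a,b] → ℝ` (with right-limit function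
`fp` and left-limit function `fm`, where `fm a = f a` and `fp b = f b`), the total
variation of `f` on `[a,b]` equals the supremum over partitions
`a = x₀ < … < xₙ = b` of
`∑ (|f(xₖ₋₁+) − f(xₖ₋₁)| + |f(xₖ−) − f(xₖ₋₁+)| + |f(xₖ) − f(xₖ−)|)`. -/
theorem regulated_variation_formula
    (a b : ℝ) (hab : a ≤ b) (f fp fm : ℝ → ℝ)
    (hfp : ∀ x ∈ Set.Ico a b,
      Tendsto f (nhdsWithin x (Set.Ioc x b)) (𝓝 (fp x)))
    (hfpb : fp b = f b)
    (hfm : ∀ x ∈ Set.Ioc a b,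
      Tendsto f (nhdsWithin x (Set.Ico a x)) (𝓝 (fm x)))
    (hfma : fm a = f a) :
    eVariationOn f (Set.Icc a b) =
      sSup {S : ℝ≥0∞ | ∃ n : ℕ, ∃ x : ℕ → ℝ,
        x 0 = a ∧ x n = b ∧ StrictMonoOn x (Set.Iic n) ∧
        S = ∑ k ∈ Finset.range n, ENNReal.ofReal
          (|fp (x k) - f (x k)| + |fm (x (k + 1)) - fp (x k)| +
            |f (x (k + 1)) - fm (x (k + 1))|)} := by
  refine le_antisymm ?_ ?_
  · -- eVariationOn ≤ sSup
    classical
    unfold eVariationOn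
    refine iSup_le ?_
    rintro ⟨n, u, hu, us⟩
    dsimp only
    set F : Finset ℝ := insert a (insert b ((Finset.range (n+1)).image u)) with hF
    have haF : a ∈ F := by simp [hF]
    have hbF : b ∈ F := by simp [hF]
    have hFab : ∀ t ∈ F, a ≤ t ∧ t ≤ b := by
      intro t ht
      simp only [hF, Finset.mem_insert, Finset.mem_image, Finset.mem_range] at ht
      rcases ht with rfl | rfl | ⟨i, _, rfl⟩
      · exact ⟨le_rfl, hab⟩
      · exact ⟨hab, le_rfl⟩
      · exact ⟨(us i).1, (us i).2⟩
    have hcard : 0 < F.card := Finset.card_pos.2 ⟨a, haF⟩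
    set m := F.card - 1 with hm
    have hmcard : m + 1 = F.card := Nat.succ_pred_eq_of_pos hcard
    set e := F.orderIsoOfFin rfl with he
    set x : ℕ → ℝ := fun j => if h : j < F.card then (e ⟨j, h⟩ : ℝ) else b with hx
    have hxval : ∀ j (h : j < F.card), x j = (e ⟨j, h⟩ : ℝ) := by
      intro j h; simp [hx, h]
    have hxF : ∀ j, j < F.card → x j ∈ F := by
      intro j h; rw [hxval j h]; exact (e ⟨j, h⟩).2
    have hxlt : ∀ i j (hi : i < F.card) (hj : j < F.card), i < j → x i < x j := by
      intro i j hi hj hij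
      rw [hxval i hi, hxval j hj]
      exact Subtype.coe_lt_coe.2 (e.lt_iff_lt.2 (by exact Fin.mk_lt_mk.2 hij))
    have hxle : ∀ i j (hi : i < F.card) (hj : j < F.card), i ≤ j → x i ≤ x j := by
      intro i j hi hj hij
      rcases eq_or_lt_of_le hij with rfl | h
      · exact le_rfl
      · exact (hxlt i j hi hj h).le
    have hx0 : x 0 = a := by
      refine le_antisymm ?_ (hFab _ (hxF 0 hcard)).1
      have h1 : (⟨0, hcard⟩ : Fin F.card) ≤ e.symm ⟨a, haF⟩ := Fin.le_def.2 (Nat.zero_le _)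
      have : x 0 ≤ (e (e.symm ⟨a, haF⟩) : ℝ) := by
        rw [hxval 0 hcard]
        exact Subtype.coe_le_coe.2 (e.le_iff_le.2 h1)
      simpa using this
    have hmlt : m < F.card := by omega
    have hxm : x m = b := by
      refine le_antisymm (hFab _ (hxF m hmlt)).2 ?_
      have h1 : e.symm ⟨b, hbF⟩ ≤ (⟨m, hmlt⟩ : Fin F.card) :=
        Fin.le_def.2 (show ((e.symm ⟨b, hbF⟩ : Fin F.card) : ℕ) ≤ m by
          have := (e.symm ⟨b, hbF⟩).isLt; omega)
      have : (e (e.symm ⟨b, hbF⟩) : ℝ) ≤ x m := by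
        rw [hxval m hmlt]
        exact Subtype.coe_le_coe.2 (e.le_iff_le.2 h1)
      simpa using this
    have hxstrict : StrictMonoOn x (Set.Iic m) := by
      intro i hi j hj hij
      exact hxlt i j (by simp at hi; omega) (by simp at hj; omega) hij
    -- index map
    have humem : ∀ i, i ≤ n → u i ∈ F := by
      intro i hi
      simp only [hF, Finset.mem_insert, Finset.mem_image, Finset.mem_range]
      exact Or.inr (Or.inr ⟨i, by omega, rfl⟩)
    set p : ℕ → ℕ := fun i => if h : u i ∈ F then ((e.symm ⟨u i, h⟩ : Fin F.card) : ℕ) else 0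
      with hp
    have hplt : ∀ i, p i < F.card := by
      intro i
      simp only [hp]
      split
      · exact (e.symm _).isLt
      · exact hcard
    have hxp : ∀ i, i ≤ n → x (p i) = u i := by
      intro i hi
      have h := humem i hi
      simp only [hp, dif_pos h]
      rw [hxval _ (e.symm ⟨u i, h⟩).isLt]
      simp
    have hpmono : ∀ i j, i ≤ j → j ≤ n → p i ≤ p j := by
      intro i j hij hjn
      have hi := humem i (hij.trans hjn)
      have hj := humem j hjn
      simp only [hp, dif_pos hi, dif_pos hj]
      exact Fin.le_iff_val_le_val.1 (e.symm.le_iff_le.2 (Subtype.mk_le_mk.2 (hu hij)))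
    have hpm : ∀ i, p i ≤ m := fun i => by have := hplt i; omega
    -- refinement
    refine le_trans ?_ (le_sSup ⟨m, x, hx0, hxm, hxstrict, rfl⟩)
    calc ∑ i ∈ Finset.range n, edist (f (u (i + 1))) (f (u i))
        ≤ ∑ i ∈ Finset.range n, ∑ j ∈ Finset.Ico (p i) (p (i+1)),
            edist (f (x (j+1))) (f (x j)) := by
          refine Finset.sum_le_sum ?_
          intro i hi
          simp only [Finset.mem_range] at hi
          rw [← hxp i (by omega), ← hxp (i+1) (by omega)]
          have h := edist_le_Ico_sum_edist (fun j => f (x j)) (hpmono i (i+1) (by omega) (by omega))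
          rw [edist_comm]
          refine h.trans (le_of_eq (Finset.sum_congr rfl ?_))
          intro j _
          exact edist_comm _ _
      _ = ∑ j ∈ (Finset.range n).biUnion (fun i => Finset.Ico (p i) (p (i+1))),
            edist (f (x (j+1))) (f (x j)) := by
          refine (Finset.sum_biUnion ?_).symm
          intro i hi j hj hij
          simp only [Finset.coe_range, Set.mem_Iio] at hi hj
          rcases lt_or_gt_of_ne hij with h | h
          · have := hpmono (i+1) j (by omega) (by omega)
            refine Finset.disjoint_left.2 ?_
            intro k hk hk'
            simp only [Finset.mem_Ico] at hk hk'
            omega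
          · have := hpmono (j+1) i (by omega) (by omega)
            refine Finset.disjoint_left.2 ?_
            intro k hk hk'
            simp only [Finset.mem_Ico] at hk hk'
            omega
      _ ≤ ∑ j ∈ Finset.range m, edist (f (x (j+1))) (f (x j)) := by
          refine Finset.sum_le_sum_of_subset ?_
          intro k hk
          simp only [Finset.mem_biUnion, Finset.mem_range, Finset.mem_Ico] at hk ⊢
          obtain ⟨i, hi, h1, h2⟩ := hk
          have := hpm (i+1)
          omega
      _ ≤ ∑ j ∈ Finset.range m, ENNReal.ofReal
            (|fp (x j) - f (x j)| + |fm (x (j + 1)) - fp (x j)| +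
              |f (x (j + 1)) - fm (x (j + 1))|) := by
          refine Finset.sum_le_sum ?_
          intro j _
          rw [edist_dist, Real.dist_eq]
          refine ENNReal.ofReal_le_ofReal ?_
          have t1 := abs_sub_le (f (x (j+1))) (fm (x (j+1))) (f (x j))
          have t2 := abs_sub_le (fm (x (j+1))) (fp (x j)) (f (x j))
          linarith
  · -- sSup ≤ eVariationOn
    classical
    refine sSup_le ?_
    rintro S ⟨n, x, hx0, hxn, hstrict, rfl⟩
    rcases Nat.eq_zero_or_pos n with rfl | hn
    · simp
    -- basic facts about x
    have hxmono : ∀ i j, i ≤ j → j ≤ n → x i ≤ x j := by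
      intro i j hij hjn
      exact hstrict.monotoneOn (by simp; omega) (by simp; omega) hij
    have hxa : ∀ k, k ≤ n → a ≤ x k := fun k hk => hx0 ▸ hxmono 0 k (by omega) hk
    have hxb : ∀ k, k ≤ n → x k ≤ b := fun k hk => hxn ▸ hxmono k n hk le_rfl
    have hxlt : ∀ k, k < n → x k < x (k+1) := by
      intro k hk
      exact hstrict (by simp; omega) (by simp; omega) (by omega)
    refine ENNReal.le_of_forall_pos_le_add ?_
    intro ε hε _
    set δ : ℝ := (ε : ℝ) / (4 * n) with hδdef
    have hδ : 0 < δ := by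
      apply div_pos (by exact_mod_cast hε)
      positivity
    -- choose intermediate points
    have key : ∀ k : ℕ, ∃ y z : ℝ, k < n →
        (x k < y ∧ y < z ∧ z < x (k+1) ∧ |f y - fp (x k)| ≤ δ ∧ |f z - fm (x (k+1))| ≤ δ) := by
      intro k
      by_cases hk : k < n
      · have hlt := hxlt k hk
        have hak : a ≤ x k := hxa k (by omega)
        have hkb : x (k+1) ≤ b := hxb (k+1) (by omega)
        have hxkb : x k < b := lt_of_lt_of_le hlt hkb
        -- choose y
        haveI hne : (𝓝[Set.Ioc (x k) b] (x k)).NeBot := by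
          refine mem_closure_iff_nhdsWithin_neBot.1 ?_
          rw [closure_Ioc (ne_of_lt hxkb)]
          exact ⟨le_rfl, hxkb.le⟩
        have hmem1 : Set.Ioo (x k) (x (k+1)) ∈ 𝓝[Set.Ioc (x k) b] (x k) := by
          have h1 : Set.Iio (x (k+1)) ∈ 𝓝 (x k) := Iio_mem_nhds hlt
          have h2 := inter_mem_nhdsWithin (Set.Ioc (x k) b) h1
          refine Filter.mem_of_superset h2 ?_
          rintro t ⟨⟨ht1, ht2⟩, ht3⟩
          exact ⟨ht1, ht3⟩
        have hmem2 : {t : ℝ | |f t - fp (x k)| ≤ δ} ∈ 𝓝[Set.Ioc (x k) b] (x k) := by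
          have hball : Metric.closedBall (fp (x k)) δ ∈ 𝓝 (fp (x k)) :=
            Metric.closedBall_mem_nhds _ hδ
          have := (hfp (x k) ⟨hak, hxkb⟩) hball
          refine Filter.mem_of_superset this ?_
          intro t ht
          simpa [Metric.mem_closedBall, Real.dist_eq] using ht
        obtain ⟨y, hy1, hy2⟩ := Filter.nonempty_of_mem (inter_mem hmem1 hmem2)
        -- choose z
        have hay : a < x (k+1) := lt_of_le_of_lt hak hlt
        haveI hne' : (𝓝[Set.Ico a (x (k+1))] (x (k+1))).NeBot := by
          refine mem_closure_iff_nhdsWithin_neBot.1 ?_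
          rw [closure_Ico (ne_of_lt hay)]
          exact ⟨hay.le, le_rfl⟩
        have hmem1' : Set.Ioo y (x (k+1)) ∈ 𝓝[Set.Ico a (x (k+1))] (x (k+1)) := by
          have h1 : Set.Ioi y ∈ 𝓝 (x (k+1)) := Ioi_mem_nhds hy1.2
          have h2 := inter_mem_nhdsWithin (Set.Ico a (x (k+1))) h1
          refine Filter.mem_of_superset h2 ?_
          rintro t ⟨⟨ht1, ht2⟩, ht3⟩
          exact ⟨ht3, ht2⟩
        have hmem2' : {t : ℝ | |f t - fm (x (k+1))| ≤ δ} ∈ 𝓝[Set.Ico a (x (k+1))] (x (k+1)) := by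
          have hball : Metric.closedBall (fm (x (k+1))) δ ∈ 𝓝 (fm (x (k+1))) :=
            Metric.closedBall_mem_nhds _ hδ
          have := (hfm (x (k+1)) ⟨hay, hkb⟩) hball
          refine Filter.mem_of_superset this ?_
          intro t ht
          simpa [Metric.mem_closedBall, Real.dist_eq] using ht
        obtain ⟨z, hz1, hz2⟩ := Filter.nonempty_of_mem (inter_mem hmem1' hmem2')
        exact ⟨y, z, fun _ => ⟨hy1.1, hz1.1, hz1.2, hy2, hz2⟩⟩
      · exact ⟨0, 0, fun h => absurd h hk⟩
    choose y z hyz using key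
    -- the refined partition
    set u : ℕ → ℝ := fun j => if j < 3*n then
        (if j % 3 = 0 then x (j/3) else if j % 3 = 1 then y (j/3) else z (j/3)) else b
      with hu
    have hu0 : ∀ k, k < n → u (3*k) = x k := by
      intro k hk
      have h1 : 3*k < 3*n := by omega
      have h2 : 3*k % 3 = 0 := by omega
      have h3 : 3*k / 3 = k := by omega
      simp [hu, h1, h2, h3]
    have hu1 : ∀ k, k < n → u (3*k+1) = y k := by
      intro k hk
      have h1 : 3*k+1 < 3*n := by omega
      have h2 : (3*k+1) % 3 = 1 := by omega
      have h3 : (3*k+1) / 3 = k := by omega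
      simp [hu, h1, h2, h3]
    have hu2 : ∀ k, k < n → u (3*k+2) = z k := by
      intro k hk
      have h1 : 3*k+2 < 3*n := by omega
      have h2 : (3*k+2) % 3 = 2 := by omega
      have h3 : (3*k+2) / 3 = k := by omega
      simp [hu, h1, h2, h3]
    have hu3 : ∀ k, k < n → u (3*k+3) = x (k+1) := by
      intro k hk
      by_cases h1 : 3*k+3 < 3*n
      · have h2 : (3*k+3) % 3 = 0 := by omega
        have h3 : (3*k+3) / 3 = k+1 := by omega
        simp [hu, h1, h2, h3]
      · have h4 : k + 1 = n := by omega
        have : u (3*k+3) = b := by simp [hu, h1]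
        rw [this, h4, hxn]
    have humono : Monotone u := by
      refine monotone_nat_of_le_succ ?_
      intro j
      by_cases hj : j < 3*n
      · have hk : j / 3 < n := by omega
        obtain ⟨hzy1, hzy2, hzy3, _, _⟩ := hyz (j/3) hk
        rcases (show j % 3 = 0 ∨ j % 3 = 1 ∨ j % 3 = 2 by omega) with h | h | h
        · have e1 : j = 3*(j/3) := by omega
          have := (hu0 (j/3) hk); have := (hu1 (j/3) hk)
          rw [show j = 3*(j/3) by omega, hu0 (j/3) hk,
            show 3*(j/3)+1 = 3*(j/3)+1 from rfl, hu1 (j/3) hk]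
          exact hzy1.le
        · rw [show j = 3*(j/3)+1 by omega, hu1 (j/3) hk,
            show 3*(j/3)+1+1 = 3*(j/3)+2 by omega, hu2 (j/3) hk]
          exact hzy2.le
        · rw [show j = 3*(j/3)+2 by omega, hu2 (j/3) hk,
            show 3*(j/3)+2+1 = 3*(j/3)+3 by omega, hu3 (j/3) hk]
          exact hzy3.le
      · have h1 : u j = b := by simp [hu, hj]
        have h2 : u (j+1) = b := by simp [hu, show ¬ (j+1 < 3*n) by omega]
        rw [h1, h2]
    have humem : ∀ i, u i ∈ Set.Icc a b := by
      intro i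
      by_cases hi : i < 3*n
      · have hk : i / 3 < n := by omega
        obtain ⟨h1, h2, h3, _, _⟩ := hyz (i/3) hk
        have ha1 : a ≤ x (i/3) := hxa _ (by omega)
        have hb1 : x (i/3+1) ≤ b := hxb _ (by omega)
        simp only [hu, if_pos hi]
        split
        · exact ⟨ha1, le_trans (hxlt _ hk).le hb1⟩
        · split
          · exact ⟨le_trans ha1 h1.le, le_trans (h2.trans h3).le hb1⟩
          · exact ⟨le_trans ha1 (h1.trans h2).le, le_trans h3.le hb1⟩
      · simp only [hu, if_neg hi]
        exact ⟨hab, le_rfl⟩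
    have husum := eVariationOn.sum_le (f := f) (n := 3*n) humono humem
    -- per-term estimate
    have hterm : ∀ k, k < n →
        ENNReal.ofReal (|fp (x k) - f (x k)| + |fm (x (k + 1)) - fp (x k)| +
            |f (x (k + 1)) - fm (x (k + 1))|)
          ≤ (edist (f (u (3*k+1))) (f (u (3*k))) + edist (f (u (3*k+1+1))) (f (u (3*k+1)))
              + edist (f (u (3*k+2+1))) (f (u (3*k+2)))) + ENNReal.ofReal (4*δ) := by
      intro k hk
      obtain ⟨h1, h2, h3, h4, h5⟩ := hyz k hk
      rw [hu0 k hk, hu1 k hk, show 3*k+1+1 = 3*k+2 by omega, hu2 k hk,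
        show 3*k+2+1 = 3*k+3 by omega, hu3 k hk]
      rw [edist_dist, edist_dist, edist_dist, Real.dist_eq, Real.dist_eq, Real.dist_eq]
      rw [← ENNReal.ofReal_add (by positivity) (by positivity),
        ← ENNReal.ofReal_add (by positivity) (by positivity),
        ← ENNReal.ofReal_add (by positivity) (by positivity)]
      refine ENNReal.ofReal_le_ofReal ?_
      have t1 := abs_sub_le (fp (x k)) (f (y k)) (f (x k))
      have t2 := abs_sub_le (fm (x (k+1))) (f (z k)) (fp (x k))
      have t2' := abs_sub_le (f (z k)) (f (y k)) (fp (x k))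
      have t3 := abs_sub_le (f (x (k+1))) (f (z k)) (fm (x (k+1)))
      have c1 : |fp (x k) - f (y k)| = |f (y k) - fp (x k)| := abs_sub_comm _ _
      have c2 : |fm (x (k+1)) - f (z k)| = |f (z k) - fm (x (k+1))| := abs_sub_comm _ _
      have c3 : |f (y k) - fp (x k)| ≤ δ := h4
      have c4 : |f (z k) - fm (x (k+1))| ≤ δ := h5
      have c5 : |f (z k) - fm (x (k+1))| = |fm (x (k+1)) - f (z k)| := abs_sub_comm _ _
      linarith
    -- put it together
    calc ∑ k ∈ Finset.range n, ENNReal.ofReal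
          (|fp (x k) - f (x k)| + |fm (x (k + 1)) - fp (x k)| + |f (x (k + 1)) - fm (x (k + 1))|)
        ≤ ∑ k ∈ Finset.range n, ((edist (f (u (3*k+1))) (f (u (3*k)))
            + edist (f (u (3*k+1+1))) (f (u (3*k+1)))
            + edist (f (u (3*k+2+1))) (f (u (3*k+2)))) + ENNReal.ofReal (4*δ)) := by
          refine Finset.sum_le_sum ?_
          intro k hk
          exact hterm k (Finset.mem_range.1 hk)
      _ = (∑ j ∈ Finset.range (3*n), edist (f (u (j+1))) (f (u j)))
            + n * ENNReal.ofReal (4*δ) := by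
          rw [Finset.sum_add_distrib, regulated_variation_sum3 (fun j => edist (f (u (j+1))) (f (u j))) n]
          simp [Finset.sum_const, nsmul_eq_mul]
      _ ≤ eVariationOn f (Set.Icc a b) + ↑ε := by
          refine add_le_add husum (le_of_eq ?_)
          rw [← ENNReal.ofReal_natCast n, ← ENNReal.ofReal_mul (by positivity)]
          rw [show (n : ℝ) * (4*δ) = ε by
            rw [hδdef]; field_simp]
          exact ENNReal.ofReal_coe_nnreal
end

section
/- Let M be a length space, let Θ ⊆ M be a permeable subset, and let (Y, d_Y) be a metric space. Then every continuous function f : M → Y which is intrinsically L-Lipschitz continuous on E = M ∖ Θ is L-Lipschitz continuous on all of M with respect to the metric d of M. -/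
open Set Filter
open scoped ENNReal NNReal Topology

/-- The intrinsic (pseudo-)metric of a subset `E` of a metric space: the infimum of the
lengths of paths from `x` to `y` that stay in `E` (`∞` if there is no such path). -/
noncomputable def intrinsicMetric {M : Type*} [PseudoEMetricSpace M]
    (E : Set M) (x y : M) : ℝ≥0∞ :=
  ⨅ (γ : ℝ → M) (_ : ContinuousOn γ (Set.Icc 0 1))
    (_ : Set.MapsTo γ (Set.Icc 0 1) E) (_ : γ 0 = x) (_ : γ 1 = y),
    eVariationOn γ (Set.Icc 0 1)

/-- The `Θ`-intrinsic metric on a metric space `M`: the infimum of the lengths of paths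
from `x` to `y` whose image meets `Θ` in a set with at most countable closure. -/
noncomputable def thetaIntrinsicMetric {M : Type*} [EMetricSpace M]
    (Θ : Set M) (x y : M) : ℝ≥0∞ :=
  ⨅ (γ : ℝ → M) (_ : ContinuousOn γ (Set.Icc 0 1))
    (_ : γ 0 = x) (_ : γ 1 = y)
    (_ : (closure (γ '' Set.Icc 0 1 ∩ Θ)).Countable),
    eVariationOn γ (Set.Icc 0 1)

/-- Reparametrizing a path defined on `[a,b]` to `[0,1]` shows that the intrinsic metric
between the endpoints is at most the variation of the path, provided the path stays in `E`. -/
lemma intrinsic_le_eVar {M : Type*} [PseudoEMetricSpace M] (E : Set M) (γ : ℝ → M)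
    {a b : ℝ} (hab : a ≤ b) (hcont : ContinuousOn γ (Set.Icc a b))
    (himg : ∀ u ∈ Set.Icc a b, γ u ∈ E) :
    intrinsicMetric E (γ a) (γ b) ≤ eVariationOn γ (Set.Icc a b) := by
  rcases eq_or_lt_of_le hab with rfl | hlt
  · -- constant path
    have h0 : intrinsicMetric E (γ a) (γ a) ≤ eVariationOn (fun _ : ℝ => γ a) (Set.Icc 0 1) := by
      refine iInf_le_of_le (fun _ => γ a) ?_
      refine iInf_le_of_le continuousOn_const ?_
      refine iInf_le_of_le (fun u _ => himg a ⟨le_rfl, le_rfl⟩) ?_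
      exact iInf_le_of_le rfl (iInf_le_of_le rfl le_rfl)
    have h1 : eVariationOn (fun _ : ℝ => γ a) (Set.Icc 0 1) = 0 := by
      apply eVariationOn.constant_on
      rintro p ⟨u, hu, rfl⟩ q ⟨v, hv, rfl⟩
      rfl
    exact le_trans (h0.trans (le_of_eq h1)) zero_le
  · set ψ : ℝ → ℝ := fun u => a + u * (b - a) with hψdef
    have hmono : MonotoneOn ψ (Set.Icc 0 1) := by
      intro u _ v _ huv
      simp only [ψ]
      nlinarith
    have himage : ψ '' Set.Icc 0 1 = Set.Icc a b := by
      apply Set.Subset.antisymm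
      · rintro _ ⟨u, hu, rfl⟩
        constructor
        · simp only [ψ]; nlinarith [hu.1, hu.2]
        · simp only [ψ]; nlinarith [hu.1, hu.2]
      · rintro z hz
        refine ⟨(z - a) / (b - a), ⟨?_, ?_⟩, ?_⟩
        · apply div_nonneg (by linarith [hz.1]) (by linarith)
        · rw [div_le_one (by linarith)]; linarith [hz.2]
        · simp only [ψ]
          have hba : b - a ≠ 0 := by linarith
          field_simp
          ring
    have hmaps : Set.MapsTo ψ (Set.Icc 0 1) (Set.Icc a b) := by
      rw [← himage]; exact Set.mapsTo_image _ _
    have hvar : eVariationOn (γ ∘ ψ) (Set.Icc 0 1) = eVariationOn γ (Set.Icc a b) := by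
      rw [eVariationOn.comp_eq_of_monotoneOn γ ψ hmono, himage]
    have hψc : Continuous ψ := by
      simp only [ψ]; fun_prop
    refine le_trans ?_ (le_of_eq hvar)
    refine iInf_le_of_le (γ ∘ ψ) ?_
    refine iInf_le_of_le (hcont.comp hψc.continuousOn hmaps) ?_
    refine iInf_le_of_le (fun u hu => himg _ (hmaps hu)) ?_
    refine iInf_le_of_le (by simp [ψ]) ?_
    exact iInf_le_of_le (by simp [ψ]) le_rfl

/-- Let `M` be a length space and `Θ ⊆ M` a permeable subset. Every
continuous `f : M → Y` which is intrinsically `L`-Lipschitz on `E = M \ Θ` is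
`L`-Lipschitz on all of `M`. -/
theorem permeable_removability
    {M Y : Type*} [MetricSpace M] [MetricSpace Y]
    (hlength : ∀ x y : M, intrinsicMetric Set.univ x y = edist x y)
    (Θ : Set M)
    (hperm : ∀ x y : M, thetaIntrinsicMetric Θ x y = intrinsicMetric Set.univ x y)
    (f : M → Y) (hf : Continuous f) (L : ℝ≥0)
    (hlip : ∀ x ∈ Θᶜ, ∀ y ∈ Θᶜ,
      edist (f x) (f y) ≤ (L : ℝ≥0∞) * intrinsicMetric Θᶜ x y) :
    LipschitzWith L f := by
  intro x y
  refine ENNReal.le_of_forall_pos_le_add fun ε hε _ => ?_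
  set ε' : ℝ≥0 := ε / (L + 2) with hε'def
  have hL2 : (L + 2 : ℝ≥0) ≠ 0 := by positivity
  have hε' : 0 < ε' := by
    rw [pos_iff_ne_zero, hε'def, Ne, div_eq_zero_iff]
    push_neg
    exact ⟨hε.ne', hL2⟩
  have hkey : edist (f x) (f y) ≤ ↑L * edist x y + (↑L * (ε' : ℝ≥0∞) + 2 * (ε' : ℝ≥0∞)) := by
    -- get a path witnessing permeability
    have hθ : thetaIntrinsicMetric Θ x y = edist x y := by rw [hperm, hlength]
    have hlt : thetaIntrinsicMetric Θ x y < edist x y + ε' := by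
      rw [hθ]
      exact ENNReal.lt_add_right (edist_ne_top x y) (by exact_mod_cast hε'.ne')
    simp only [thetaIntrinsicMetric, iInf_lt_iff] at hlt
    obtain ⟨γ, hγ, hγ0, hγ1, hS, hvar⟩ := hlt
    set S : Set M := closure (γ '' Set.Icc 0 1 ∩ Θ) with hSdef
    have hScl : IsClosed S := isClosed_closure
    have hΘS : ∀ u ∈ Set.Icc (0:ℝ) 1, γ u ∈ Θ → γ u ∈ S := fun u hu hΘu =>
      subset_closure ⟨Set.mem_image_of_mem γ hu, hΘu⟩
    set g : ℝ → Y := fun s => f (γ s) with hgdef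
    have hg : ContinuousOn g (Set.Icc 0 1) := hf.comp_continuousOn hγ
    set φ : ℝ → ℝ≥0∞ := fun s => edist (f x) (g s) with hφdef
    -- enumeration of the relevant distances
    obtain ⟨q, hq⟩ : ∃ q : ℕ → ℝ≥0∞, ∀ z ∈ S, ∃ n, q n = edist (f x) (f z) := by
      have hTc : (insert (⊤:ℝ≥0∞) ((fun z => edist (f x) (f z)) '' S)).Countable :=
        (hS.image _).insert _
      obtain ⟨q, hq⟩ := hTc.exists_eq_range ⟨⊤, Set.mem_insert _ _⟩
      refine ⟨q, fun z hz => ?_⟩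
      have hmem : edist (f x) (f z) ∈ insert (⊤:ℝ≥0∞) ((fun z => edist (f x) (f z)) '' S) :=
        Set.mem_insert_of_mem _ ⟨z, hz, rfl⟩
      rw [hq] at hmem
      obtain ⟨n, hn⟩ := hmem
      exact ⟨n, hn⟩
    set Mx : ℝ → ℝ≥0∞ := fun t => ⨆ s ∈ Set.Icc (0:ℝ) t, φ s with hMdef
    set B : ℝ → ℝ≥0∞ := fun t => ∑' n, if q n < Mx t then (ε' : ℝ≥0∞) / 2 ^ n else 0 with hBdef
    set R : ℝ → ℝ≥0∞ := fun t => ↑L * eVariationOn γ (Set.Icc 0 t) + B t with hRdef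
    set A : Set ℝ := {t | t ∈ Set.Icc (0:ℝ) 1 ∧ Mx t ≤ R t} with hAdef
    have hMmono : ∀ {s t : ℝ}, s ≤ t → Mx s ≤ Mx t := fun {s t} hst =>
      biSup_mono fun u hu => ⟨hu.1, hu.2.trans hst⟩
    have hBmono : ∀ {s t : ℝ}, s ≤ t → B s ≤ B t := by
      intro s t hst
      refine ENNReal.tsum_le_tsum fun n => ?_
      by_cases h : q n < Mx s
      · rw [if_pos h, if_pos (h.trans_le (hMmono hst))]
      · rw [if_neg h]; exact zero_le
    have hVmono : ∀ {s t : ℝ}, s ≤ t →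
        eVariationOn γ (Set.Icc 0 s) ≤ eVariationOn γ (Set.Icc 0 t) := fun {s t} hst =>
      eVariationOn.mono γ (Set.Icc_subset_Icc_right hst)
    have hRmono : ∀ {s t : ℝ}, s ≤ t → R s ≤ R t := fun {s t} hst =>
      add_le_add (mul_le_mul_right (hVmono hst) _) (hBmono hst)
    have hVadd : ∀ {c t : ℝ}, 0 ≤ c → c ≤ t →
        eVariationOn γ (Set.Icc 0 c) + eVariationOn γ (Set.Icc c t)
          = eVariationOn γ (Set.Icc 0 t) := by
      intro c t h0c hct
      have := eVariationOn.Icc_add_Icc γ (s := (Set.univ : Set ℝ)) h0c hct (Set.mem_univ c)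
      simpa using this
    have hφ0 : φ 0 = 0 := by simp [hφdef, hgdef, hγ0]
    have hφMx : ∀ {t : ℝ}, 0 ≤ t → φ t ≤ Mx t := fun {t} ht =>
      le_iSup₂_of_le t ⟨ht, le_rfl⟩ le_rfl
    have h0A : (0:ℝ) ∈ A := by
      refine ⟨⟨le_rfl, zero_le_one⟩, ?_⟩
      have hM0 : Mx 0 ≤ R 0 := by
        refine iSup₂_le fun s hs => ?_
        have hs0 : s = 0 := le_antisymm hs.2 hs.1
        rw [hs0, hφ0]
        exact zero_le
      exact hM0
    have hAbdd : BddAbove A := ⟨1, fun t ht => ht.1.2⟩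
    set c : ℝ := sSup A with hcdef
    have hcA0 : ∀ t ∈ A, t ≤ c := fun t ht => le_csSup hAbdd ht
    have hc0 : (0:ℝ) ≤ c := hcA0 0 h0A
    have hc1 : c ≤ 1 := csSup_le ⟨0, h0A⟩ fun t ht => ht.1.2
    have hcI : c ∈ Set.Icc (0:ℝ) 1 := ⟨hc0, hc1⟩
    -- c belongs to A
    have hφle : ∀ s, s < c → 0 ≤ s → φ s ≤ R c := by
      intro s hs hs0
      obtain ⟨t, htA, hst⟩ := exists_lt_of_lt_csSup ⟨0, h0A⟩ (hs.trans_le le_rfl)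
      have h1 : φ s ≤ Mx t := le_iSup₂_of_le s ⟨hs0, hst.le⟩ le_rfl
      exact h1.trans (htA.2.trans (hRmono (hcA0 t htA)))
    have hcmem : Mx c ≤ R c := by
      refine iSup₂_le fun s hs => ?_
      rcases lt_or_eq_of_le hs.2 with hlt2 | rfl
      · exact hφle s hlt2 hs.1
      · rcases eq_or_lt_of_le hs.1 with h0s | hpos
        · rw [← h0s, hφ0]; exact zero_le
        · have hnb : (𝓝[Set.Ico (0:ℝ) c] c).NeBot := by
            rw [← mem_closure_iff_nhdsWithin_neBot, closure_Ico hpos.ne]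
            exact ⟨hpos.le, le_rfl⟩
          have htends : Tendsto φ (𝓝[Set.Ico (0:ℝ) c] c) (𝓝 (φ c)) := by
            have hφc : Tendsto φ (𝓝[Set.Icc (0:ℝ) 1] c) (𝓝 (φ c)) :=
              Filter.Tendsto.edist tendsto_const_nhds (hg c hcI)
            exact hφc.mono_left (nhdsWithin_mono c
              (fun u hu => ⟨hu.1, hu.2.le.trans hc1⟩))
          refine le_of_tendsto htends ?_
          filter_upwards [self_mem_nhdsWithin] with u hu
          exact hφle u hu.2 hu.1
    -- the supremum is 1
    have hceq : c = 1 := by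
      by_contra hne
      have hclt : c < 1 := lt_of_le_of_ne hc1 hne
      -- generic construction of a point beyond c
      have hMsplit : ∀ t, c ≤ t → Mx t ≤ Mx c ⊔ ⨆ s ∈ Set.Icc c t, φ s := by
        intro t hct
        have : Set.Icc (0:ℝ) t = Set.Icc 0 c ∪ Set.Icc c t :=
          (Set.Icc_union_Icc_eq_Icc hc0 hct).symm
        simp only [hMdef]
        rw [this, iSup_union]
      have hgetδ : ∀ (P : ℝ → Prop), (∀ᶠ s in 𝓝[Set.Icc (0:ℝ) 1] c, P s) →
          ∃ t, c < t ∧ t ∈ Set.Icc (0:ℝ) 1 ∧ ∀ s ∈ Set.Icc c t, P s := by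
        intro P hev
        obtain ⟨δ, hδ, hball⟩ := Metric.mem_nhdsWithin_iff.1 hev
        refine ⟨min (c + δ/2) 1, lt_min (by linarith) hclt,
          ⟨le_min (by linarith) zero_le_one, min_le_right _ _⟩, ?_⟩
        intro s hs
        have hs1 : s ∈ Set.Icc (0:ℝ) 1 :=
          ⟨hc0.trans hs.1, hs.2.trans (min_le_right _ _)⟩
        have hdist : dist s c < δ := by
          rw [Real.dist_eq, abs_of_nonneg (by linarith [hs.1])]
          have := hs.2.trans (min_le_left _ _)
          linarith
        exact hball ⟨Metric.mem_ball.2 hdist, hs1⟩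
      have hcontr : ∀ t, c < t → t ∈ Set.Icc (0:ℝ) 1 → Mx t ≤ R t → False := by
        intro t hct htI hMt
        exact absurd (hcA0 t ⟨htI, hMt⟩) (not_le.2 hct)
      rcases lt_or_eq_of_le (hφMx hc0) with hφlt | hφeq
      · -- Case A : φ c < Mx c, the sup is attained strictly before c
        have hev : ∀ᶠ s in 𝓝[Set.Icc (0:ℝ) 1] c, edist (g s) (g c) < Mx c - φ c :=
          (EMetric.tendsto_nhds.1 (hg c hcI)) _ (tsub_pos_iff_lt.2 hφlt)
        obtain ⟨t, hct, htI, hP⟩ := hgetδ _ hev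
        refine hcontr t hct htI ?_
        refine (hMsplit t hct.le).trans ?_
        refine sup_le (hcmem.trans (hRmono hct.le)) ?_
        refine iSup₂_le fun s hs => ?_
        have h1 : φ s ≤ φ c + edist (g c) (g s) := by
          simpa only [hφdef] using edist_triangle (f x) (g c) (g s)
        have h2 : edist (g c) (g s) ≤ Mx c - φ c := by
          rw [edist_comm]; exact (hP s hs).le
        calc φ s ≤ φ c + (Mx c - φ c) := h1.trans (add_le_add_right h2 _)
          _ = Mx c := add_tsub_cancel_of_le hφlt.le
          _ ≤ R c := hcmem
          _ ≤ R t := hRmono hct.le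
      · -- Case B : φ c = Mx c
        by_cases hcS : γ c ∈ S
        · -- the point is in the countable set : use the bonus term
          obtain ⟨n, hn⟩ := hq (γ c) hcS
          have hqn : q n = Mx c := by rw [hn, ← hφeq]
          set w : ℝ≥0∞ := (ε' : ℝ≥0∞) / 2 ^ n with hwdef
          have hw : 0 < w := by
            apply ENNReal.div_pos
            · exact_mod_cast hε'.ne'
            · exact ENNReal.pow_ne_top (by norm_num)
          have hev : ∀ᶠ s in 𝓝[Set.Icc (0:ℝ) 1] c, edist (g s) (g c) < w :=
            (EMetric.tendsto_nhds.1 (hg c hcI)) _ hw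
          obtain ⟨t, hct, htI, hP⟩ := hgetδ _ hev
          refine hcontr t hct htI ?_
          have hMt : Mx t ≤ Mx c + w := by
            refine (hMsplit t hct.le).trans (sup_le le_self_add ?_)
            refine iSup₂_le fun s hs => ?_
            have h1 : φ s ≤ φ c + edist (g c) (g s) := by
              simpa only [hφdef] using edist_triangle (f x) (g c) (g s)
            have h2 : edist (g c) (g s) ≤ w := by
              rw [edist_comm]; exact (hP s hs).le
            exact h1.trans (add_le_add (hφeq.le.trans (hMmono le_rfl)) h2)
          by_cases hMM : Mx t ≤ Mx c
          · exact hMM.trans (hcmem.trans (hRmono hct.le))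
          · push_neg at hMM
            have hgain : B c + w ≤ B t := by
              have h1 : B c + w
                  = ∑' m, ((if q m < Mx c then (ε' : ℝ≥0∞) / 2 ^ m else 0)
                    + (if m = n then w else 0)) := by
                rw [ENNReal.tsum_add, tsum_ite_eq]
              rw [h1]
              refine ENNReal.tsum_le_tsum fun m => ?_
              by_cases hmn : m = n
              · subst hmn
                rw [if_neg (by rw [hqn]; exact lt_irrefl _), if_pos rfl,
                  if_pos (by rw [hqn]; exact hMM), zero_add]
              · rw [if_neg hmn, add_zero]
                by_cases h : q m < Mx c
                · rw [if_pos h, if_pos (h.trans hMM)]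
                · rw [if_neg h]; exact zero_le
            calc Mx t ≤ Mx c + w := hMt
              _ ≤ (↑L * eVariationOn γ (Set.Icc 0 c) + B c) + w := add_le_add_left hcmem _
              _ = ↑L * eVariationOn γ (Set.Icc 0 c) + (B c + w) := by ring
              _ ≤ ↑L * eVariationOn γ (Set.Icc 0 t) + B t :=
                add_le_add (mul_le_mul_right (hVmono hct.le) _) hgain
              _ = R t := rfl
        · -- the point is outside Θ : use the Lipschitz estimate on Θᶜ
          have hev : ∀ᶠ s in 𝓝[Set.Icc (0:ℝ) 1] c, γ s ∉ S :=
            (hγ c hcI).preimage_mem_nhdsWithin (hScl.isOpen_compl.mem_nhds hcS)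
          obtain ⟨t, hct, htI, hP⟩ := hgetδ _ hev
          refine hcontr t hct htI ?_
          have hclean : ∀ u ∈ Set.Icc c t, γ u ∈ Θᶜ := by
            intro u hu hΘu
            have hu1 : u ∈ Set.Icc (0:ℝ) 1 := ⟨hc0.trans hu.1, hu.2.trans htI.2⟩
            exact hP u hu (hΘS u hu1 hΘu)
          have hstep : ∀ s ∈ Set.Icc c t,
              edist (g c) (g s) ≤ ↑L * eVariationOn γ (Set.Icc c t) := by
            intro s hs
            have hsub : Set.Icc c s ⊆ Set.Icc c t := Set.Icc_subset_Icc_right hs.2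
            have hsub1 : Set.Icc c s ⊆ Set.Icc (0:ℝ) 1 := fun u hu =>
              ⟨hc0.trans hu.1, (hu.2.trans hs.2).trans htI.2⟩
            have h1 : edist (f (γ c)) (f (γ s)) ≤ ↑L * intrinsicMetric Θᶜ (γ c) (γ s) :=
              hlip (γ c) (hclean c ⟨le_rfl, hs.1.trans hs.2⟩) (γ s) (hclean s hs)
            have h2 : intrinsicMetric Θᶜ (γ c) (γ s) ≤ eVariationOn γ (Set.Icc c s) :=
              intrinsic_le_eVar Θᶜ γ hs.1 (hγ.mono hsub1) (fun u hu => hclean u (hsub hu))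
            calc edist (g c) (g s) ≤ ↑L * eVariationOn γ (Set.Icc c s) :=
                h1.trans (mul_le_mul_right h2 _)
              _ ≤ ↑L * eVariationOn γ (Set.Icc c t) :=
                mul_le_mul_right (eVariationOn.mono γ hsub) _
          have hMt : Mx t ≤ R c + ↑L * eVariationOn γ (Set.Icc c t) := by
            refine (hMsplit t hct.le).trans (sup_le (hcmem.trans le_self_add) ?_)
            refine iSup₂_le fun s hs => ?_
            have h1 : φ s ≤ φ c + edist (g c) (g s) := by
              simpa only [hφdef] using edist_triangle (f x) (g c) (g s)
            refine h1.trans (add_le_add ?_ (hstep s hs))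
            exact (hφMx hc0).trans hcmem
          refine hMt.trans ?_
          calc R c + ↑L * eVariationOn γ (Set.Icc c t)
              = ↑L * (eVariationOn γ (Set.Icc 0 c) + eVariationOn γ (Set.Icc c t)) + B c := by
                simp only [hRdef]; ring
            _ = ↑L * eVariationOn γ (Set.Icc 0 t) + B c := by rw [hVadd hc0 hct.le]
            _ ≤ ↑L * eVariationOn γ (Set.Icc 0 t) + B t := add_le_add_right (hBmono hct.le) _
            _ = R t := rfl
    -- conclusion
    have hB1 : B 1 ≤ 2 * (ε' : ℝ≥0∞) := by
      have h1 : B 1 ≤ ∑' n, (ε' : ℝ≥0∞) / 2 ^ n := by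
        refine ENNReal.tsum_le_tsum fun n => ?_
        split
        · exact le_rfl
        · exact zero_le
      have h2 : ∑' n, (ε' : ℝ≥0∞) / 2 ^ n = (ε' : ℝ≥0∞) * 2 := by
        simp only [div_eq_mul_inv, ENNReal.inv_pow, ENNReal.tsum_mul_left]
        rw [ENNReal.tsum_geometric, ENNReal.one_sub_inv_two, inv_inv]
      rw [mul_comm] at h2
      exact h1.trans h2.le
    have hfin : edist (f x) (f y) ≤ R 1 := by
      have h1 : edist (f x) (f y) = φ 1 := by rw [hφdef]; simp [hgdef, hγ1]
      rw [h1]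
      exact (hφMx zero_le_one).trans (hceq ▸ hcmem)
    refine hfin.trans ?_
    calc R 1 = ↑L * eVariationOn γ (Set.Icc 0 1) + B 1 := rfl
      _ ≤ ↑L * (edist x y + (ε' : ℝ≥0∞)) + 2 * (ε' : ℝ≥0∞) :=
        add_le_add (mul_le_mul_right hvar.le _) hB1
      _ = ↑L * edist x y + (↑L * (ε' : ℝ≥0∞) + 2 * (ε' : ℝ≥0∞)) := by ring
  refine hkey.trans ?_
  have harith : (↑L * (ε' : ℝ≥0∞) + 2 * (ε' : ℝ≥0∞)) = (ε : ℝ≥0∞) := by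
    have : (L * ε' + 2 * ε' : ℝ≥0) = ε := by
      rw [← add_mul, hε'def, mul_comm, div_mul_cancel₀ _ hL2]
    rw [← this]
    push_cast
    ring
  rw [harith]
end
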